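/- arXiv:1909.07661 — 9 statements merged into one kernel-verified Lean document; each statement's English description precedes it below -/
import Mathlib

section
/- Let H be a complex Hilbert space and let A be a closed, densely defined (possibly unbounded) linear operator in H with domain D(A). Let (C_n) be a sequence of bounded linear operators on H and C a bounded linear operator on H such that C_n x ∈ D(A) for every n ∈ ℕ and every x ∈ H, and suppose there is a constant M ≥ 0 with ‖A(C_n x)‖ ≤ M‖x‖ for all n and all x ∈ H. If C_n converges to C in the weak operator topology, i.e. ⟨y, C_n x⟩ → ⟨y, C x⟩ for all x, y ∈ H, then C x ∈ D(A) for every x ∈ H and ⟨y, A(C_n x)⟩ → ⟨y, A(C x)⟩ for all x, y ∈ H. -/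
open Filter
open scoped InnerProductSpace

section Aux

open LinearPMap

variable {H : Type*} [NormedAddCommGroup H] [InnerProductSpace ℂ H] [CompleteSpace H]

/-- The graph of an unbounded operator, viewed inside the `L²` product `WithLp 2 (H × H)`. -/
noncomputable def g2Aux (A : H →ₗ.[ℂ] H) : Submodule ℂ (WithLp 2 (H × H)) :=
  A.graph.comap (WithLp.linearEquiv 2 ℂ (H × H)).toLinearMap

theorem g2Aux_isClosed {A : H →ₗ.[ℂ] H} (hc : A.IsClosed) :
    IsClosed ((g2Aux A : Set (WithLp 2 (H × H)))) := by
  have : (g2Aux A : Set (WithLp 2 (H × H))) =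
      (WithLp.prodContinuousLinearEquiv 2 ℂ H H) ⁻¹' (A.graph : Set (H × H)) := rfl
  rw [this]
  exact hc.preimage (WithLp.prodContinuousLinearEquiv 2 ℂ H H).continuous

/-- Any element of the orthogonal complement of the graph of `A` in the `L²` product gives
rise to an element of the domain of the adjoint. -/
theorem g2Aux_orth {A : H →ₗ.[ℂ] H} (hA : Dense (A.domain : Set H)) {v : WithLp 2 (H × H)}
    (hv : v ∈ (g2Aux A)ᗮ) : ∃ h2 : v.snd ∈ A†.domain, A† ⟨v.snd, h2⟩ = -v.fst := by
  have key : ∀ u : A.domain, ⟪(u : H), v.fst⟫_ℂ + ⟪A u, v.snd⟫_ℂ = 0 := by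
    intro u
    have hmem : ((WithLp.equiv 2 (H × H)).symm ((u : H), A u)) ∈ g2Aux A := A.mem_graph u
    have := (Submodule.mem_orthogonal _ _).1 hv _ hmem
    simpa [WithLp.prod_inner_apply] using this
  have key2 : ∀ u : A.domain, ⟪(-v.fst : H), (u : H)⟫_ℂ = ⟪v.snd, A u⟫_ℂ := by
    intro u
    have h1 := key u
    have : ⟪A u, v.snd⟫_ℂ = -⟪(u : H), v.fst⟫_ℂ := by linear_combination h1
    calc ⟪(-v.fst : H), (u : H)⟫_ℂ = -⟪v.fst, (u : H)⟫_ℂ := by rw [inner_neg_left]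
    _ = -(starRingEnd ℂ) ⟪(u : H), v.fst⟫_ℂ := by rw [inner_conj_symm]
    _ = (starRingEnd ℂ) ⟪A u, v.snd⟫_ℂ := by rw [this]; simp
    _ = ⟪v.snd, A u⟫_ℂ := by rw [inner_conj_symm]
  have h2 : v.snd ∈ A†.domain := mem_adjoint_domain_of_exists _ ⟨-v.fst, key2⟩
  exact ⟨h2, adjoint_apply_eq hA _ key2⟩

/-- The adjoint of a closed densely defined operator is densely defined (von Neumann). -/
theorem adjoint_dense_aux {A : H →ₗ.[ℂ] H} (hA : Dense (A.domain : Set H)) (hc : A.IsClosed) :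
    Dense ((A†.domain : Submodule ℂ H) : Set H) := by
  haveI : CompleteSpace (g2Aux A) := (g2Aux_isClosed hc).completeSpace_coe
  rw [Submodule.dense_iff_topologicalClosure_eq_top, Submodule.topologicalClosure_eq_top_iff,
    Submodule.eq_bot_iff]
  intro v hv
  have hmem : ((WithLp.equiv 2 (H × H)).symm (0, v)) ∈ (g2Aux A)ᗮᗮ := by
    rw [Submodule.mem_orthogonal]
    intro w hw
    obtain ⟨h2, -⟩ := g2Aux_orth hA hw
    have hzero : ⟪w.snd, v⟫_ℂ = 0 := (Submodule.mem_orthogonal _ _).1 hv _ h2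
    simp [WithLp.prod_inner_apply, hzero]
  rw [Submodule.orthogonal_orthogonal] at hmem
  have : ((0 : H), v) ∈ A.graph := hmem
  exact A.graph_fst_eq_zero_snd this rfl

end Aux

/-- Let `A` be a closed densely defined operator in a complex Hilbert space `H`, `(C_n)`
bounded operators with `C_n x ∈ D(A)` and `‖A C_n x‖ ≤ M‖x‖`. If `C_n → C` in the weak
operator topology, then `C x ∈ D(A)` for all `x` and `A C_n → A C` weakly. -/
theorem statement_0 {H : Type*} [NormedAddCommGroup H] [InnerProductSpace ℂ H]
    [CompleteSpace H] (A : H →ₗ.[ℂ] H)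
    (hAclosed : A.IsClosed) (hAdense : Dense (A.domain : Set H))
    (C : ℕ → H →L[ℂ] H) (Clim : H →L[ℂ] H)
    (hmem : ∀ (n : ℕ) (x : H), C n x ∈ A.domain)
    (M : ℝ) (hM : 0 ≤ M)
    (hbound : ∀ (n : ℕ) (x : H), ‖A ⟨C n x, hmem n x⟩‖ ≤ M * ‖x‖)
    (hweak : ∀ x y : H,
      Tendsto (fun n => ⟪y, C n x⟫_ℂ) atTop (nhds ⟪y, Clim x⟫_ℂ)) :
    ∃ hmem' : ∀ x : H, Clim x ∈ A.domain,
      ∀ x y : H,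
        Tendsto (fun n => ⟪y, A ⟨C n x, hmem n x⟩⟫_ℂ) atTop
          (nhds ⟪y, A ⟨Clim x, hmem' x⟩⟫_ℂ) := by
  classical
  set B := LinearPMap.adjoint A with hBdef
  have hBdense : Dense (B.domain : Set H) := adjoint_dense_aux hAdense hAclosed
  have hFA : B.IsFormalAdjoint A := LinearPMap.adjoint_isFormalAdjoint hAdense
  -- uniform bound on ⟪B y, Clim x⟫
  have hbnd : ∀ (x : H) (y : B.domain), ‖⟪(B y : H), Clim x⟫_ℂ‖ ≤ M * ‖x‖ * ‖(y : H)‖ := by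
    intro x y
    refine le_of_tendsto (hweak x (B y)).norm (Eventually.of_forall fun n => ?_)
    have h1 : ⟪(B y : H), C n x⟫_ℂ = ⟪(y : H), A ⟨C n x, hmem n x⟩⟫_ℂ :=
      hFA y ⟨C n x, hmem n x⟩
    rw [h1]
    calc ‖⟪(y : H), A ⟨C n x, hmem n x⟩⟫_ℂ‖ ≤ ‖(y : H)‖ * ‖A ⟨C n x, hmem n x⟩‖ :=
          norm_inner_le_norm _ _
    _ ≤ ‖(y : H)‖ * (M * ‖x‖) := by
          have := hbound n x
          have h0 : (0:ℝ) ≤ ‖(y : H)‖ := norm_nonneg _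
          nlinarith
    _ = M * ‖x‖ * ‖(y : H)‖ := by ring
  -- Clim x is in the domain of the double adjoint
  have hdom : ∀ x : H, Clim x ∈ (LinearPMap.adjoint B).domain := by
    intro x
    rw [LinearPMap.mem_adjoint_domain_iff]
    refine AddMonoidHomClass.continuous_of_bound ((innerₛₗ ℂ (Clim x)).comp B.toFun)
      (M * ‖x‖) fun y => ?_
    have : ‖⟪Clim x, (B y : H)⟫_ℂ‖ ≤ M * ‖x‖ * ‖(y : H)‖ := by
      rw [← inner_conj_symm, RCLike.norm_conj]
      exact hbnd x y
    simpa using this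
  have hFB : (LinearPMap.adjoint B).IsFormalAdjoint B :=
    LinearPMap.adjoint_isFormalAdjoint hBdense
  -- the pair (Clim x, B† (Clim x)) is in the graph of A
  have hgraph : ∀ x : H,
      (Clim x, (LinearPMap.adjoint B ⟨Clim x, hdom x⟩ : H)) ∈ A.graph := by
    intro x
    haveI : CompleteSpace (g2Aux A) := (g2Aux_isClosed hAclosed).completeSpace_coe
    have hmem2 : ((WithLp.equiv 2 (H × H)).symm
        (Clim x, (LinearPMap.adjoint B ⟨Clim x, hdom x⟩ : H))) ∈ (g2Aux A)ᗮᗮ := by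
      rw [Submodule.mem_orthogonal]
      intro w hw
      obtain ⟨h2, heq⟩ := g2Aux_orth hAdense hw
      have hz : ⟪(LinearPMap.adjoint B ⟨Clim x, hdom x⟩ : H), (w.snd : H)⟫_ℂ =
          ⟪Clim x, (B ⟨w.snd, h2⟩ : H)⟫_ℂ := hFB ⟨Clim x, hdom x⟩ ⟨w.snd, h2⟩
      have h3 : ⟪w.snd, (LinearPMap.adjoint B ⟨Clim x, hdom x⟩ : H)⟫_ℂ =
          -⟪w.fst, Clim x⟫_ℂ := by
        rw [← inner_conj_symm, hz, heq, inner_neg_right, map_neg, inner_conj_symm]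
      rw [WithLp.prod_inner_apply]
      change ⟪w.fst, Clim x⟫_ℂ + ⟪w.snd, (LinearPMap.adjoint B ⟨Clim x, hdom x⟩ : H)⟫_ℂ = 0
      rw [h3]
      ring
    rw [Submodule.orthogonal_orthogonal] at hmem2
    exact hmem2
  have hmem' : ∀ x, Clim x ∈ A.domain := fun x =>
    LinearPMap.mem_domain_of_mem_graph (hgraph x)
  have hval : ∀ x, A ⟨Clim x, hmem' x⟩ = LinearPMap.adjoint B ⟨Clim x, hdom x⟩ := fun x =>
    ((LinearPMap.image_iff (hmem' x)).2 (hgraph x)).symm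
  refine ⟨hmem', ?_⟩
  intro x y
  -- convergence for y in the dense domain of B
  have key : ∀ y' : B.domain,
      Tendsto (fun n => ⟪(y' : H), A ⟨C n x, hmem n x⟩⟫_ℂ) atTop
        (nhds ⟪(y' : H), A ⟨Clim x, hmem' x⟩⟫_ℂ) := by
    intro y'
    have h1 : ∀ n, ⟪(y' : H), A ⟨C n x, hmem n x⟩⟫_ℂ = ⟪(B y' : H), C n x⟫_ℂ := fun n =>
      (hFA y' ⟨C n x, hmem n x⟩).symm
    have h2 : ⟪(y' : H), A ⟨Clim x, hmem' x⟩⟫_ℂ = ⟪(B y' : H), Clim x⟫_ℂ := by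
      rw [hval, ← inner_conj_symm, hFB ⟨Clim x, hdom x⟩ y', inner_conj_symm]
    simp_rw [h1, h2]
    exact hweak x (B y')
  -- ε/3 argument to extend to all y
  set z : H := A ⟨Clim x, hmem' x⟩ with hzdef
  set K : ℝ := M * ‖x‖ + ‖z‖ with hKdef
  have hK0 : 0 ≤ K := by positivity
  have hKn : ∀ n, ‖A ⟨C n x, hmem n x⟩ - z‖ ≤ K :=
    fun n => (norm_sub_le _ _).trans (add_le_add (hbound n x) le_rfl)
  rw [Metric.tendsto_atTop]
  intro ε hε
  obtain ⟨y', hy'mem, hy'close⟩ := hBdense.exists_dist_lt y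
    (show (0:ℝ) < ε / (2 * (K + 1)) by positivity)
  obtain ⟨N, hN⟩ := Metric.tendsto_atTop.1 (key ⟨y', hy'mem⟩) (ε / 2) (by positivity)
  refine ⟨N, fun n hn => ?_⟩
  have hNn := hN n hn
  rw [dist_eq_norm] at hNn ⊢
  have e1 : ⟪y, A ⟨C n x, hmem n x⟩⟫_ℂ - ⟪y, z⟫_ℂ = ⟪y, A ⟨C n x, hmem n x⟩ - z⟫_ℂ := by
    rw [inner_sub_right]
  have e2 : ⟪y', A ⟨C n x, hmem n x⟩⟫_ℂ - ⟪y', z⟫_ℂ = ⟪y', A ⟨C n x, hmem n x⟩ - z⟫_ℂ := by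
    rw [inner_sub_right]
  rw [e1]
  have split : ⟪y, A ⟨C n x, hmem n x⟩ - z⟫_ℂ =
      ⟪y - y', A ⟨C n x, hmem n x⟩ - z⟫_ℂ + ⟪y', A ⟨C n x, hmem n x⟩ - z⟫_ℂ := by
    rw [← inner_add_left, sub_add_cancel]
  rw [split]
  have b1 : ‖⟪y - y', A ⟨C n x, hmem n x⟩ - z⟫_ℂ‖ ≤ ‖y - y'‖ * K := by
    calc ‖⟪y - y', A ⟨C n x, hmem n x⟩ - z⟫_ℂ‖ ≤ ‖y - y'‖ * ‖A ⟨C n x, hmem n x⟩ - z‖ :=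
          norm_inner_le_norm _ _
    _ ≤ ‖y - y'‖ * K := by
          have := hKn n
          have h0 : (0:ℝ) ≤ ‖y - y'‖ := norm_nonneg _
          nlinarith
  have b2 : ‖⟪y', A ⟨C n x, hmem n x⟩ - z⟫_ℂ‖ < ε / 2 := by
    rw [← e2]; exact hNn
  have hyy : ‖y - y'‖ < ε / (2 * (K + 1)) := by
    rw [← dist_eq_norm]; exact hy'close
  calc ‖⟪y - y', A ⟨C n x, hmem n x⟩ - z⟫_ℂ + ⟪y', A ⟨C n x, hmem n x⟩ - z⟫_ℂ‖
      ≤ ‖⟪y - y', A ⟨C n x, hmem n x⟩ - z⟫_ℂ‖ + ‖⟪y', A ⟨C n x, hmem n x⟩ - z⟫_ℂ‖ :=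
        norm_add_le _ _
  _ < ε := by
        have h4 : ε / (2 * (K + 1)) * (K + 1) = ε / 2 := by field_simp
        have h5 : ‖y - y'‖ * (K + 1) < ε / 2 := by
          calc ‖y - y'‖ * (K + 1) < ε / (2 * (K + 1)) * (K + 1) := by
                have : (0:ℝ) < K + 1 := by linarith
                exact mul_lt_mul_of_pos_right hyy this
          _ = ε / 2 := h4
        nlinarith [norm_nonneg (y - y')]
end

section
/- Let H be a complex Hilbert space and let A be a closed, densely defined (possibly unbounded) linear operator in H with domain D(A). Let (C_n) be a sequence of bounded linear operators on H and C a bounded linear operator on H such that C_n x ∈ D(A) for every n ∈ ℕ and every x ∈ H, and suppose there is a constant M ≥ 0 with ‖A(C_n x)‖ ≤ M‖x‖ for all n and all x ∈ H; in particular x ↦ A(C_n x) is a bounded operator, denoted A∘C_n. If the adjoints C_n* converge to C* in the strong operator topology, i.e. C_n* x → C* x in norm for every x ∈ H, then C x ∈ D(A) for every x ∈ H, x ↦ A(C x) is a bounded operator A∘C, and (A∘C_n)* converges to (A∘C)* in the strong operator topology. -/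
open Filter
open scoped InnerProductSpace

section Auxiliary

open scoped Topology

set_option linter.unusedSectionVars false

variable {H : Type*} [NormedAddCommGroup H] [InnerProductSpace ℂ H] [CompleteSpace H]

/-- A uniformly bounded sequence of operators converging pointwise on a dense submodule
converges pointwise everywhere, to a continuous linear map. -/
theorem aux_strong_limit (f : ℕ → H →L[ℂ] H) (M : ℝ)
    (hb : ∀ n, ‖f n‖ ≤ M) (D : Submodule ℂ H) (hD : Dense (D : Set H))
    (hc : ∀ y ∈ D, ∃ l, Tendsto (fun n => f n y) atTop (𝓝 l)) :
    ∃ g : H →L[ℂ] H, ∀ x, Tendsto (fun n => f n x) atTop (𝓝 (g x)) := by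
  have hcauchy : ∀ x : H, CauchySeq fun n => f n x := by
    intro x
    rw [Metric.cauchySeq_iff]
    intro ε hε
    have hMpos : (0:ℝ) < M + 1 := by
      have : (0:ℝ) ≤ M := le_trans (norm_nonneg _) (hb 0)
      linarith
    obtain ⟨y, hyD, hy⟩ : ∃ y ∈ (D : Set H), dist x y < ε / (3 * (M + 1)) :=
      Metric.mem_closure_iff.mp (hD x) _ (by positivity)
    obtain ⟨l, hl⟩ := hc y hyD
    obtain ⟨N, hN⟩ := Metric.cauchySeq_iff.mp hl.cauchySeq (ε / 3) (by positivity)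
    refine ⟨N, fun m hm n hn => ?_⟩
    have key : ∀ k, dist (f k x) (f k y) < ε / 3 := by
      intro k
      rw [dist_eq_norm, ← map_sub]
      calc ‖f k (x - y)‖ ≤ ‖f k‖ * ‖x - y‖ := (f k).le_opNorm _
        _ ≤ (M + 1) * ‖x - y‖ := by
            apply mul_le_mul_of_nonneg_right _ (norm_nonneg _)
            linarith [hb k]
        _ < (M + 1) * (ε / (3 * (M + 1))) := by
            apply mul_lt_mul_of_pos_left _ hMpos
            rwa [dist_eq_norm] at hy
        _ = ε / 3 := by field_simp
    calc dist (f m x) (f n x)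
        ≤ dist (f m x) (f m y) + dist (f m y) (f n y) + dist (f n y) (f n x) :=
          dist_triangle4 _ _ _ _
      _ < ε / 3 + ε / 3 + ε / 3 := by
          rw [dist_comm (f n y)]
          have h1 := key m
          have h2 := hN m hm n hn
          have h3 := key n
          linarith
      _ = ε := by ring
  choose g hg using fun x => cauchySeq_tendsto_of_complete (hcauchy x)
  exact ⟨continuousLinearMapOfTendsto f (tendsto_pi_nhds.mpr hg), hg⟩

/-- The graph of `A`, viewed inside the Hilbert space `WithLp 2 (H × H)`. -/
def graphL2 (A : H →ₗ.[ℂ] H) : Submodule ℂ (WithLp 2 (H × H)) where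
  carrier := {q | (q.fst, q.snd) ∈ A.graph}
  add_mem' := fun ha hb => A.graph.add_mem ha hb
  zero_mem' := A.graph.zero_mem
  smul_mem' := fun c _ ha => A.graph.smul_mem c ha

theorem mem_graphL2 (A : H →ₗ.[ℂ] H) (q : WithLp 2 (H × H)) :
    q ∈ graphL2 A ↔ (q.fst, q.snd) ∈ A.graph := Iff.rfl

theorem graphL2_isClosed (A : H →ₗ.[ℂ] H) (hA : A.IsClosed) :
    IsClosed ((graphL2 A : Set (WithLp 2 (H × H)))) := by
  have hc : Continuous fun q : WithLp 2 (H × H) => ((q.fst, q.snd) : H × H) :=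
    WithLp.prod_continuous_ofLp 2 H H
  exact hA.preimage hc

/-- `rotGraphL2 A = {(-Au, u)}` inside `WithLp 2 (H × H)`. -/
def rotGraphL2 (A : H →ₗ.[ℂ] H) : Submodule ℂ (WithLp 2 (H × H)) where
  carrier := {q | (q.snd, -q.fst) ∈ A.graph}
  add_mem' := by
    intro a b ha hb
    have h := A.graph.add_mem ha hb
    show ((a + b).snd, -(a + b).fst) ∈ A.graph
    rw [WithLp.add_fst, WithLp.add_snd, neg_add]
    exact h
  zero_mem' := by
    show ((0 : WithLp 2 (H × H)).snd, -(0 : WithLp 2 (H × H)).fst) ∈ A.graph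
    rw [WithLp.zero_fst, WithLp.zero_snd, neg_zero]
    exact A.graph.zero_mem
  smul_mem' := by
    intro c a ha
    have h := A.graph.smul_mem c ha
    show ((c • a).snd, -(c • a).fst) ∈ A.graph
    rw [WithLp.smul_fst, WithLp.smul_snd, ← smul_neg]
    exact h

theorem mem_rotGraphL2 (A : H →ₗ.[ℂ] H) (q : WithLp 2 (H × H)) :
    q ∈ rotGraphL2 A ↔ (q.snd, -q.fst) ∈ A.graph := Iff.rfl

theorem rotGraphL2_isClosed (A : H →ₗ.[ℂ] H) (hA : A.IsClosed) :
    IsClosed ((rotGraphL2 A : Set (WithLp 2 (H × H)))) := by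
  have h1 : Continuous fun q : WithLp 2 (H × H) => ((q.fst, q.snd) : H × H) :=
    WithLp.prod_continuous_ofLp 2 H H
  exact hA.preimage (h1.snd.prodMk h1.fst.neg)

/-- The domain of the adjoint of a closed operator is dense. -/
theorem adjoint_domain_dense (A : H →ₗ.[ℂ] H) (hAclosed : A.IsClosed) :
    Dense ((A.adjoint.domain : Set H)) := by
  rw [Submodule.dense_iff_topologicalClosure_eq_top, Submodule.topologicalClosure_eq_top_iff]
  rw [Submodule.eq_bot_iff]
  intro z hz
  rw [Submodule.mem_orthogonal] at hz
  haveI : CompleteSpace (rotGraphL2 A) := (rotGraphL2_isClosed A hAclosed).completeSpace_coe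
  set qz : WithLp 2 (H × H) := (WithLp.equiv 2 (H × H)).symm (z, 0) with hqz
  have hq : qz ∈ rotGraphL2 A := by
    rw [← Submodule.orthogonal_orthogonal (rotGraphL2 A), Submodule.mem_orthogonal]
    intro w hw
    rw [Submodule.mem_orthogonal] at hw
    have hwd : w.fst ∈ A.adjoint.domain := by
      apply LinearPMap.mem_adjoint_domain_of_exists
      refine ⟨w.snd, fun u => ?_⟩
      have hu : ((WithLp.equiv 2 (H × H)).symm (-(A u), (u : H))) ∈ rotGraphL2 A := by
        rw [mem_rotGraphL2]
        simp only [WithLp.equiv_symm_apply, WithLp.ofLp_toLp, WithLp.ofLp_fst, WithLp.ofLp_snd, WithLp.toLp_fst, WithLp.toLp_snd, neg_neg]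
        exact A.mem_graph u
      have h0 := hw _ hu
      rw [WithLp.prod_inner_apply] at h0
      simp only [WithLp.equiv_symm_apply, WithLp.ofLp_toLp, WithLp.ofLp_fst, WithLp.ofLp_snd, WithLp.toLp_fst, WithLp.toLp_snd] at h0
      have h1 : ⟪(u : H), w.snd⟫_ℂ = ⟪(A u : H), w.fst⟫_ℂ := by
        rw [inner_neg_left, neg_add_eq_zero] at h0
        exact h0.symm
      calc ⟪w.snd, (u : H)⟫_ℂ = starRingEnd ℂ ⟪(u : H), w.snd⟫_ℂ := (inner_conj_symm _ _).symm
        _ = starRingEnd ℂ ⟪(A u : H), w.fst⟫_ℂ := by rw [h1]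
        _ = ⟪w.fst, (A u : H)⟫_ℂ := inner_conj_symm _ _
    rw [WithLp.prod_inner_apply]
    simp only [hqz, WithLp.equiv_symm_apply, WithLp.ofLp_toLp, WithLp.ofLp_fst, WithLp.ofLp_snd, WithLp.toLp_fst, WithLp.toLp_snd, inner_zero_right, add_zero]
    exact hz w.fst hwd
  rw [mem_rotGraphL2] at hq
  simp only [hqz, WithLp.equiv_symm_apply, WithLp.ofLp_toLp, WithLp.ofLp_fst, WithLp.ofLp_snd, WithLp.toLp_fst, WithLp.toLp_snd] at hq
  have := A.graph_fst_eq_zero_snd hq rfl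
  simpa [neg_eq_zero] using this

end Auxiliary

/-- Let `A` be a closed densely defined operator in a complex Hilbert space `H`, `(C_n)`
bounded operators with `C_n x ∈ D(A)` and `‖A C_n x‖ ≤ M‖x‖`, and `T n = A ∘ C_n` the
corresponding bounded operators. If `C_n* → C*` strongly, then `C x ∈ D(A)` for all `x`,
`A ∘ C` is a bounded operator `T∞`, and `(A ∘ C_n)* → (A ∘ C)*` strongly. -/
theorem statement_1 {H : Type*} [NormedAddCommGroup H] [InnerProductSpace ℂ H]
    [CompleteSpace H] (A : H →ₗ.[ℂ] H)
    (hAclosed : A.IsClosed) (hAdense : Dense (A.domain : Set H))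
    (C : ℕ → H →L[ℂ] H) (Clim : H →L[ℂ] H)
    (hmem : ∀ (n : ℕ) (x : H), C n x ∈ A.domain)
    (M : ℝ) (hM : 0 ≤ M)
    (hbound : ∀ (n : ℕ) (x : H), ‖A ⟨C n x, hmem n x⟩‖ ≤ M * ‖x‖)
    (T : ℕ → H →L[ℂ] H)
    (hT : ∀ (n : ℕ) (x : H), T n x = A ⟨C n x, hmem n x⟩)
    (hstar : ∀ x : H,
      Tendsto (fun n => ContinuousLinearMap.adjoint (C n) x) atTop
        (nhds (ContinuousLinearMap.adjoint Clim x))) :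
    ∃ (hmem' : ∀ x : H, Clim x ∈ A.domain) (Tlim : H →L[ℂ] H),
      (∀ x : H, Tlim x = A ⟨Clim x, hmem' x⟩) ∧
      ∀ x : H,
        Tendsto (fun n => ContinuousLinearMap.adjoint (T n) x) atTop
          (nhds (ContinuousLinearMap.adjoint Tlim x)) := by
  classical
  have hBdense : Dense ((A.adjoint.domain : Set H)) := adjoint_domain_dense A hAclosed
  -- norm bounds
  have hTnorm : ∀ n, ‖T n‖ ≤ M := fun n =>
    ContinuousLinearMap.opNorm_le_bound _ hM fun x => by rw [hT n x]; exact hbound n x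
  have hTadjnorm : ∀ n, ‖ContinuousLinearMap.adjoint (T n)‖ ≤ M := fun n => by
    rw [ContinuousLinearMap.adjoint.norm_map (T n)]
    exact hTnorm n
  -- convergence of `(T n)†` on the domain of `A†`
  have hconvD : ∀ y ∈ A.adjoint.domain,
      ∃ l, Tendsto (fun n => ContinuousLinearMap.adjoint (T n) y) atTop (nhds l) := by
    intro y hy
    refine ⟨ContinuousLinearMap.adjoint Clim (A.adjoint ⟨y, hy⟩), ?_⟩
    have heq : ∀ n, ContinuousLinearMap.adjoint (T n) y
        = ContinuousLinearMap.adjoint (C n) (A.adjoint ⟨y, hy⟩) := by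
      intro n
      apply ext_inner_right ℂ
      intro v
      rw [ContinuousLinearMap.adjoint_inner_left, ContinuousLinearMap.adjoint_inner_left, hT n v]
      exact ((A.adjoint_isFormalAdjoint hAdense) ⟨y, hy⟩ ⟨C n v, hmem n v⟩).symm
    have : (fun n => ContinuousLinearMap.adjoint (T n) y)
        = fun n => ContinuousLinearMap.adjoint (C n) (A.adjoint ⟨y, hy⟩) := funext heq
    rw [this]
    exact hstar _
  -- the strong limit `S` of `(T n)†`
  obtain ⟨S, hS⟩ := aux_strong_limit (fun n => ContinuousLinearMap.adjoint (T n)) M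
    hTadjnorm A.adjoint.domain hBdense hconvD
  set Tlim : H →L[ℂ] H := ContinuousLinearMap.adjoint S with hTlim
  -- graph membership
  haveI : CompleteSpace (graphL2 A) := (graphL2_isClosed A hAclosed).completeSpace_coe
  have hgraph : ∀ x : H, (Clim x, Tlim x) ∈ A.graph := by
    intro x
    set qx : WithLp 2 (H × H) := (WithLp.equiv 2 (H × H)).symm (Clim x, Tlim x) with hqx
    have hqmem : qx ∈ graphL2 A := by
      rw [← Submodule.orthogonal_orthogonal (graphL2 A), Submodule.mem_orthogonal]
      intro w hw
      rw [Submodule.mem_orthogonal] at hw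
      have hzero : ∀ n : ℕ, ⟪w.fst, C n x⟫_ℂ + ⟪w.snd, T n x⟫_ℂ = 0 := by
        intro n
        have hn : ((WithLp.equiv 2 (H × H)).symm (C n x, T n x)) ∈ graphL2 A := by
          rw [mem_graphL2]
          simp only [WithLp.equiv_symm_apply, WithLp.ofLp_toLp, WithLp.ofLp_fst, WithLp.ofLp_snd, WithLp.toLp_fst, WithLp.toLp_snd]
          rw [hT n x]
          exact A.mem_graph ⟨C n x, hmem n x⟩
        have h0 := hw _ hn
        rw [WithLp.prod_inner_apply] at h0
        simp only [WithLp.equiv_symm_apply, WithLp.ofLp_toLp, WithLp.ofLp_fst, WithLp.ofLp_snd, WithLp.toLp_fst, WithLp.toLp_snd] at h0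
        calc ⟪w.fst, C n x⟫_ℂ + ⟪w.snd, T n x⟫_ℂ
            = starRingEnd ℂ (⟪C n x, w.fst⟫_ℂ + ⟪T n x, w.snd⟫_ℂ) := by
              rw [map_add, inner_conj_symm, inner_conj_symm]
          _ = 0 := by rw [h0, map_zero]
      have hlim : Tendsto
          (fun n => ⟪w.fst, C n x⟫_ℂ + ⟪w.snd, T n x⟫_ℂ) atTop
          (nhds (⟪w.fst, Clim x⟫_ℂ + ⟪w.snd, Tlim x⟫_ℂ)) := by
        have h1 : Tendsto (fun n => ⟪w.fst, C n x⟫_ℂ) atTop (nhds ⟪w.fst, Clim x⟫_ℂ) := by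
          have hrw : ∀ (B : H →L[ℂ] H), ⟪w.fst, B x⟫_ℂ = ⟪ContinuousLinearMap.adjoint B w.fst, x⟫_ℂ :=
            fun B => (ContinuousLinearMap.adjoint_inner_left B x w.fst).symm
          simp only [hrw]
          exact (hstar w.fst).inner tendsto_const_nhds
        have h2 : Tendsto (fun n => ⟪w.snd, T n x⟫_ℂ) atTop (nhds ⟪w.snd, Tlim x⟫_ℂ) := by
          have hrw : ∀ n, ⟪w.snd, T n x⟫_ℂ = ⟪ContinuousLinearMap.adjoint (T n) w.snd, x⟫_ℂ :=
            fun n => (ContinuousLinearMap.adjoint_inner_left (T n) x w.snd).symm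
          have hval : ⟪w.snd, Tlim x⟫_ℂ = ⟪S w.snd, x⟫_ℂ := by
            rw [hTlim, ContinuousLinearMap.adjoint_inner_right]
          simp only [hrw, hval]
          exact (hS w.snd).inner tendsto_const_nhds
        exact h1.add h2
      have hfinal : ⟪w.fst, Clim x⟫_ℂ + ⟪w.snd, Tlim x⟫_ℂ = 0 := by
        have : Tendsto (fun _ : ℕ => (0 : ℂ)) atTop
            (nhds (⟪w.fst, Clim x⟫_ℂ + ⟪w.snd, Tlim x⟫_ℂ)) := by
          have := hlim
          simpa only [hzero] using this
        exact tendsto_nhds_unique hlim (by simpa only [hzero] using (tendsto_const_nhds : Tendsto (fun _ : ℕ => (0:ℂ)) atTop (nhds 0)))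
      rw [WithLp.prod_inner_apply]
      simp only [hqx, WithLp.equiv_symm_apply, WithLp.ofLp_toLp, WithLp.ofLp_fst, WithLp.ofLp_snd, WithLp.toLp_fst, WithLp.toLp_snd]
      exact hfinal
    rw [mem_graphL2] at hqmem
    simpa only [hqx, WithLp.equiv_symm_apply, WithLp.ofLp_toLp, WithLp.ofLp_fst, WithLp.ofLp_snd, WithLp.toLp_fst, WithLp.toLp_snd] using hqmem
  have hmem' : ∀ x : H, Clim x ∈ A.domain := fun x =>
    LinearPMap.mem_domain_iff.mpr ⟨Tlim x, hgraph x⟩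
  refine ⟨hmem', Tlim, fun x => ?_, fun x => ?_⟩
  · exact A.mem_graph_snd_inj (hgraph x) (A.mem_graph ⟨Clim x, hmem' x⟩) rfl
  · have : ContinuousLinearMap.adjoint Tlim = S := by
      rw [hTlim, ContinuousLinearMap.adjoint_adjoint]
    rw [this]
    exact hS x
end

section
/- Let H be a complex Hilbert space and let U : ℝ → B(H) satisfy: each U(t) is unitary, U(0) = 1, and U(s+t) = U(s)U(t) for all s, t ∈ ℝ. Let A and B be (possibly unbounded) linear operators in H with domains D(A), D(B), where A is symmetric, i.e. ⟨Aψ, φ⟩ = ⟨ψ, Aφ⟩ for all ψ, φ ∈ D(A). Let D ⊆ D(B) be a subset such that for every χ ∈ D: (i) U(t)χ ∈ D(A) for all t ∈ ℝ; (ii) the map t ↦ A(U(t)χ) is continuous; (iii) for every t ∈ ℝ, the map s ↦ U(s)χ is differentiable at t with derivative i·U(t)(Bχ). Then for all ψ, φ ∈ D the function f(t) = ⟨U(t)ψ, A(U(t)φ)⟩ is continuously differentiable on ℝ with derivative f'(t) = i(⟨A(U(t)ψ), U(t)(Bφ)⟩ − ⟨U(t)(Bψ), A(U(t)φ)⟩).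 -/
open scoped InnerProductSpace

open Filter

/-- Let `U : ℝ → B(H)` be a one-parameter group of unitaries, `A` a symmetric unbounded
operator, `B` an unbounded operator, and `D ⊆ D(B)` such that for `χ ∈ D`: `U(t)χ ∈ D(A)`,
`t ↦ A U(t)χ` is continuous, and `s ↦ U(s)χ` is differentiable with derivative
`i U(t) Bχ`. Then for `ψ, φ ∈ D` the function `f(t) = ⟨U(t)ψ, A U(t)φ⟩` is continuously
differentiable with `f'(t) = i(⟨A U(t)ψ, U(t)Bφ⟩ − ⟨U(t)Bψ, A U(t)φ⟩)`. -/
theorem statement_2 {H : Type*} [NormedAddCommGroup H] [InnerProductSpace ℂ H]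
    [CompleteSpace H] (U : ℝ → H →L[ℂ] H)
    (hunitary : ∀ t, U t ∈ unitary (H →L[ℂ] H))
    (hU0 : U 0 = 1) (hUadd : ∀ s t : ℝ, U (s + t) = U s * U t)
    (A B : H →ₗ.[ℂ] H)
    (hAsymm : ∀ ψ φ : A.domain, ⟪A ψ, (φ : H)⟫_ℂ = ⟪(ψ : H), A φ⟫_ℂ)
    (D : Set H) (hDB : D ⊆ (B.domain : Set H))
    (hUA : ∀ χ, ∀ _ : χ ∈ D, ∀ t : ℝ, U t χ ∈ A.domain)
    (hcont : ∀ χ, ∀ hχ : χ ∈ D, Continuous fun t : ℝ => A ⟨U t χ, hUA χ hχ t⟩)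
    (hderiv : ∀ χ, ∀ hχ : χ ∈ D, ∀ t : ℝ,
      HasDerivAt (fun s : ℝ => U s χ) (Complex.I • U t (B ⟨χ, hDB hχ⟩)) t) :
    ∀ ψ, ∀ hψ : ψ ∈ D, ∀ φ, ∀ hφ : φ ∈ D,
      (∀ t : ℝ,
        HasDerivAt (fun s : ℝ => ⟪U s ψ, A ⟨U s φ, hUA φ hφ s⟩⟫_ℂ)
          (Complex.I * (⟪A ⟨U t ψ, hUA ψ hψ t⟩, U t (B ⟨φ, hDB hφ⟩)⟫_ℂ -
            ⟪U t (B ⟨ψ, hDB hψ⟩), A ⟨U t φ, hUA φ hφ t⟩⟫_ℂ)) t) ∧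
      Continuous (fun t : ℝ =>
        Complex.I * (⟪A ⟨U t ψ, hUA ψ hψ t⟩, U t (B ⟨φ, hDB hφ⟩)⟫_ℂ -
          ⟪U t (B ⟨ψ, hDB hψ⟩), A ⟨U t φ, hUA φ hφ t⟩⟫_ℂ)) := by
  have hnorm : ∀ t (x : H), ‖U t x‖ = ‖x‖ := fun t x =>
    ContinuousLinearMap.norm_map_of_mem_unitary (hunitary t) x
  have hUcont : ∀ χ, χ ∈ D → Continuous fun t : ℝ => U t χ := fun χ hχ =>
    continuous_iff_continuousAt.2 fun t => (hderiv χ hχ t).continuousAt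
  -- strong continuity of `t ↦ U t (B χ)` for `χ ∈ D`, via uniform convergence of
  -- difference quotients (using that each `U t` is an isometry)
  have hUBcont : ∀ χ (hχ : χ ∈ D), Continuous fun t : ℝ => U t (B ⟨χ, hDB hχ⟩) := by
    intro χ hχ
    set b : H := B ⟨χ, hDB hχ⟩ with hb
    have h0 : Tendsto (fun n : ℕ => ((n : ℝ) + 1) • (U (((n : ℝ) + 1)⁻¹) χ - χ))
        atTop (nhds (Complex.I • b)) := by
      have hs := hasDerivAt_iff_tendsto_slope.1 (hderiv χ hχ 0)
      rw [hU0] at hs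
      have hε : Tendsto (fun n : ℕ => ((n : ℝ) + 1)⁻¹) atTop (nhdsWithin 0 {(0 : ℝ)}ᶜ) := by
        apply tendsto_nhdsWithin_of_tendsto_nhds_of_eventually_within
        · exact tendsto_one_div_add_atTop_nhds_zero_nat.comp (tendsto_natCast_atTop_atTop.comp
            tendsto_id) |>.congr (by intro n; simp [one_div])
        · filter_upwards with n
          simp only [Set.mem_compl_iff, Set.mem_singleton_iff]
          positivity
      have := hs.comp hε
      refine this.congr fun n => ?_
      simp only [Function.comp_apply, slope_def_module, sub_zero]
      rw [inv_inv, hU0, ContinuousLinearMap.one_apply]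
    have key : TendstoUniformly
        (fun (n : ℕ) (t : ℝ) => ((n : ℝ) + 1) • (U (t + ((n : ℝ) + 1)⁻¹) χ - U t χ))
        (fun t => Complex.I • U t b) atTop := by
      rw [Metric.tendstoUniformly_iff]
      intro ε hε
      have := (Metric.tendsto_nhds.1 h0) ε hε
      filter_upwards [this] with n hn t
      have heq : ((n : ℝ) + 1) • (U (t + ((n : ℝ) + 1)⁻¹) χ - U t χ) =
          U t (((n : ℝ) + 1) • (U (((n : ℝ) + 1)⁻¹) χ - χ)) := by
        rw [hUadd t]
        simp [ContinuousLinearMap.mul_apply, map_smul, map_sub]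
      rw [heq]
      have heq2 : Complex.I • U t b = U t (Complex.I • b) := by simp [map_smul]
      rw [heq2, dist_eq_norm, ← map_sub, hnorm, ← dist_eq_norm]
      rw [dist_comm]
      exact hn
    have hlim : Continuous fun t => Complex.I • U t b := by
      refine key.continuous (Filter.Eventually.frequently ?_)
      filter_upwards with n
      exact ((hUcont χ hχ).comp (by continuity)).sub (hUcont χ hχ) |>.const_smul _
    have : Continuous fun t => (-Complex.I) • (Complex.I • U t b) := hlim.const_smul _
    refine this.congr fun t => ?_
    rw [smul_smul]
    simp
  intro ψ hψ φ hφ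
  constructor
  · intro t
    rw [hasDerivAt_iff_tendsto_slope]
    -- the two half-limits
    have hψslope := hasDerivAt_iff_tendsto_slope.1 (hderiv ψ hψ t)
    have hφslope := hasDerivAt_iff_tendsto_slope.1 (hderiv φ hφ t)
    have haφ : Tendsto (fun s : ℝ => A ⟨U s φ, hUA φ hφ s⟩) (nhdsWithin t {t}ᶜ)
        (nhds (A ⟨U t φ, hUA φ hφ t⟩)) :=
      ((hcont φ hφ).tendsto t).mono_left nhdsWithin_le_nhds
    have hX : Tendsto (fun s : ℝ =>
        ⟪slope (fun r : ℝ => U r ψ) t s, A ⟨U s φ, hUA φ hφ s⟩⟫_ℂ +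
        ⟪A ⟨U t ψ, hUA ψ hψ t⟩, slope (fun r : ℝ => U r φ) t s⟫_ℂ)
        (nhdsWithin t {t}ᶜ)
        (nhds (⟪Complex.I • U t (B ⟨ψ, hDB hψ⟩), A ⟨U t φ, hUA φ hφ t⟩⟫_ℂ +
          ⟪A ⟨U t ψ, hUA ψ hψ t⟩, Complex.I • U t (B ⟨φ, hDB hφ⟩)⟫_ℂ)) :=
      (hψslope.inner haφ).add (tendsto_const_nhds.inner hφslope)
    have hval : ⟪Complex.I • U t (B ⟨ψ, hDB hψ⟩), A ⟨U t φ, hUA φ hφ t⟩⟫_ℂ +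
          ⟪A ⟨U t ψ, hUA ψ hψ t⟩, Complex.I • U t (B ⟨φ, hDB hφ⟩)⟫_ℂ =
        Complex.I * (⟪A ⟨U t ψ, hUA ψ hψ t⟩, U t (B ⟨φ, hDB hφ⟩)⟫_ℂ -
          ⟪U t (B ⟨ψ, hDB hψ⟩), A ⟨U t φ, hUA φ hφ t⟩⟫_ℂ) := by
      rw [inner_smul_left, inner_smul_right]
      simp [Complex.conj_I]
      ring
    rw [← hval]
    refine Tendsto.congr' ?_ hX
    filter_upwards [self_mem_nhdsWithin] with s hs
    have hst : s - t ≠ 0 := sub_ne_zero.2 hs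
    have hsym1 : ⟪(U t ψ : H), A ⟨U s φ, hUA φ hφ s⟩⟫_ℂ =
        ⟪A ⟨U t ψ, hUA ψ hψ t⟩, (U s φ : H)⟫_ℂ :=
      (hAsymm ⟨U t ψ, hUA ψ hψ t⟩ ⟨U s φ, hUA φ hφ s⟩).symm
    have hsym2 : ⟪(U t ψ : H), A ⟨U t φ, hUA φ hφ t⟩⟫_ℂ =
        ⟪A ⟨U t ψ, hUA ψ hψ t⟩, (U t φ : H)⟫_ℂ :=
      (hAsymm ⟨U t ψ, hUA ψ hψ t⟩ ⟨U t φ, hUA φ hφ t⟩).symm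
    simp only [slope_def_module]
    have hdecomp : ⟪U s ψ, A ⟨U s φ, hUA φ hφ s⟩⟫_ℂ - ⟪U t ψ, A ⟨U t φ, hUA φ hφ t⟩⟫_ℂ =
        ⟪U s ψ - U t ψ, A ⟨U s φ, hUA φ hφ s⟩⟫_ℂ +
        ⟪A ⟨U t ψ, hUA ψ hψ t⟩, U s φ - U t φ⟫_ℂ := by
      rw [inner_sub_left, inner_sub_right, ← hsym1, ← hsym2]
      ring
    have hsmul : ∀ (v w : H), ⟪((s - t)⁻¹ : ℝ) • v, w⟫_ℂ = ((s - t : ℝ) : ℂ)⁻¹ * ⟪v, w⟫_ℂ := by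
      intro v w
      rw [show ((s - t)⁻¹ : ℝ) • v = (((s - t : ℝ) : ℂ))⁻¹ • v by
        rw [← Complex.ofReal_inv, Complex.coe_smul], inner_smul_left]
      simp
    have hsmul2 : ∀ (v w : H), ⟪v, ((s - t)⁻¹ : ℝ) • w⟫_ℂ = ((s - t : ℝ) : ℂ)⁻¹ * ⟪v, w⟫_ℂ := by
      intro v w
      rw [show ((s - t)⁻¹ : ℝ) • w = (((s - t : ℝ) : ℂ))⁻¹ • w by
        rw [← Complex.ofReal_inv, Complex.coe_smul], inner_smul_right]
    rw [hsmul, hsmul2, hdecomp, Complex.real_smul]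
    push_cast
    ring
  · have c1 : Continuous fun t : ℝ => A ⟨U t ψ, hUA ψ hψ t⟩ := hcont ψ hψ
    have c2 : Continuous fun t : ℝ => A ⟨U t φ, hUA φ hφ t⟩ := hcont φ hφ
    have c3 := hUBcont φ hφ
    have c4 := hUBcont ψ hψ
    exact continuous_const.mul ((c1.inner c3).sub (c4.inner c2))
end

section
/- Let H be a complex Hilbert space, λ ∈ ℝ, and A a densely defined selfadjoint operator in H (A equals its adjoint as an unbounded operator) satisfying ⟨ψ, Aψ⟩ ≥ λ‖ψ‖² for all ψ ∈ D(A). Let B be a linear operator in H with D(A) ⊆ D(B) and suppose there is c ≥ 0 with ‖Bψ‖ ≤ c(‖Aψ‖ + ‖ψ‖) for all ψ ∈ D(A). Suppose that for every ε > 0 there is a bounded operator R_ε on H whose range is contained in D(A) and which satisfies A(R_ε x) + (ε − λ)·R_ε x = x for all x ∈ H and R_ε(Aψ + (ε − λ)ψ) = ψ for all ψ ∈ D(A). Let ν ≥ 1 and let ω : ℝ^ν → ℝ be continuous with ω(0) = 0 and ω(k) > 0 for all k ≠ 0. Then: (a) the eigenspace N = {ψ ∈ D(A) : Aψ = λψ}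 is a closed subspace of H (and N ⊆ D(B)); (b) for every bounded set Ω ⊆ ℝ^ν there is C_Ω ≥ 0 such that ‖B(ω(k)·R_{ω(k)}x)‖ ≤ C_Ω‖x‖ for all x ∈ H and all k ∈ Ω with k ≠ 0; (c) for every x ∈ H, B(ω(k)·R_{ω(k)}x) converges in norm to B(P x) as k → 0 with k ≠ 0, where P is the orthogonal projection of H onto N. -/
set_option maxHeartbeats 1000000


open scoped InnerProductSpace

section Helpers

variable {H : Type*} [NormedAddCommGroup H] [InnerProductSpace ℂ H]

theorem st3_pmap_congr (A : H →ₗ.[ℂ] H) {u v : H} (huv : u = v) (hu : u ∈ A.domain)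
    (hv : v ∈ A.domain) : A ⟨u, hu⟩ = A ⟨v, hv⟩ := by subst huv; rfl

theorem st3_pmap_sub (A : H →ₗ.[ℂ] H) {u v : H} (hu : u ∈ A.domain) (hv : v ∈ A.domain)
    (h : u - v ∈ A.domain) : A ⟨u - v, h⟩ = A ⟨u, hu⟩ - A ⟨v, hv⟩ := by
  have e : (⟨u - v, h⟩ : A.domain) = ⟨u, hu⟩ - ⟨v, hv⟩ := rfl
  rw [e, A.map_sub]

theorem st3_pmap_smul_real (A : H →ₗ.[ℂ] H) (r : ℝ) {u : H} (hu : u ∈ A.domain)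
    (h : r • u ∈ A.domain) : A ⟨r • u, h⟩ = r • A ⟨u, hu⟩ := by
  have e : (⟨r • u, h⟩ : A.domain) = (r : ℂ) • ⟨u, hu⟩ := Subtype.ext (by
    simp [Complex.coe_smul])
  rw [e, A.map_smul, Complex.coe_smul]

end Helpers

/-- Let `A` be a densely defined selfadjoint operator in a complex Hilbert space `H` with
`A ≥ λ`, `B` an operator with `D(A) ⊆ D(B)` and `‖Bψ‖ ≤ c(‖Aψ‖ + ‖ψ‖)` on `D(A)`, and let
`R_ε = (A − λ + ε)^{-1}` for `ε > 0`. Let `ω : ℝ^ν → ℝ` be continuous with `ω(0) = 0` and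
`ω > 0` off `0`. Then (a) the eigenspace `N = ker(A − λ)` is closed and `N ⊆ D(B)`;
(b) `‖B(ω(k)R_{ω(k)}x)‖ ≤ C_Ω‖x‖` uniformly for `k` in any bounded set; and
(c) `B(ω(k)R_{ω(k)}x) → B(Px)` as `k → 0`, `k ≠ 0`, where `P` is the orthogonal
projection onto `N`. -/
theorem statement_3 {H : Type*} [NormedAddCommGroup H] [InnerProductSpace ℂ H]
    [CompleteSpace H] (lam : ℝ) (A B : H →ₗ.[ℂ] H)
    (hAdense : Dense (A.domain : Set H)) (hAsa : IsSelfAdjoint A)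
    (hlb : ∀ ψ : A.domain, lam * ‖(ψ : H)‖ ^ 2 ≤ (⟪(ψ : H), A ψ⟫_ℂ).re)
    (hAB : A.domain ≤ B.domain)
    (c : ℝ) (hc : 0 ≤ c)
    (hrel : ∀ ψ : A.domain, ‖B ⟨(ψ : H), hAB ψ.2⟩‖ ≤ c * (‖A ψ‖ + ‖(ψ : H)‖))
    (R : ℝ → H →L[ℂ] H)
    (hRmem : ∀ ε : ℝ, 0 < ε → ∀ x : H, R ε x ∈ A.domain)
    (hRres : ∀ (ε : ℝ) (hε : 0 < ε) (x : H),
      A ⟨R ε x, hRmem ε hε x⟩ + (ε - lam) • R ε x = x)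
    (hRres' : ∀ (ε : ℝ) (hε : 0 < ε) (ψ : A.domain),
      R ε (A ψ + (ε - lam) • (ψ : H)) = (ψ : H))
    (ν : ℕ) (hν : 1 ≤ ν) (ω : EuclideanSpace ℝ (Fin ν) → ℝ)
    (hωcont : Continuous ω) (hω0 : ω 0 = 0)
    (hωpos : ∀ k : EuclideanSpace ℝ (Fin ν), k ≠ 0 → 0 < ω k)
    (N : Set H)
    (hN : N = {x : H | ∃ h : x ∈ A.domain, A ⟨x, h⟩ = lam • x}) :
    (IsClosed N ∧ N ⊆ (B.domain : Set H)) ∧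
    (∀ Ω : Set (EuclideanSpace ℝ (Fin ν)), Bornology.IsBounded Ω →
      ∃ CΩ : ℝ, 0 ≤ CΩ ∧
        ∀ (x : H) (k : EuclideanSpace ℝ (Fin ν)), k ∈ Ω → ∀ hk0 : k ≠ 0,
          ‖B ⟨ω k • R (ω k) x,
              B.domain.smul_of_tower_mem (ω k)
                (hAB (hRmem (ω k) (hωpos k hk0) x))⟩‖ ≤ CΩ * ‖x‖) ∧
    (∃ (P : H →L[ℂ] H) (hPdom : ∀ x : H, P x ∈ B.domain),
      (∀ x : H, P x ∈ N) ∧ (∀ x ∈ N, P x = x) ∧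
      (∀ x : H, ∀ y ∈ N, ⟪x - P x, y⟫_ℂ = 0) ∧
      (∀ x : H, ∀ δ : ℝ, 0 < δ → ∃ r : ℝ, 0 < r ∧
        ∀ (k : EuclideanSpace ℝ (Fin ν)) (hk0 : k ≠ 0), ‖k‖ < r →
          ‖B ⟨ω k • R (ω k) x,
              B.domain.smul_of_tower_mem (ω k)
                (hAB (hRmem (ω k) (hωpos k hk0) x))⟩ - B ⟨P x, hPdom x⟩‖ < δ)) := by
  classical
  -- basic resolvent identities and estimates
  have hres : ∀ (ε : ℝ) (hε : 0 < ε) (x : H),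
      A ⟨R ε x, hRmem ε hε x⟩ = x - (ε - lam) • R ε x := fun ε hε x =>
    eq_sub_of_add_eq (hRres ε hε x)
  have h0 : ∀ (ε : ℝ) (hε : 0 < ε) (x : H),
      ε * ‖R ε x‖ ^ 2 ≤ (⟪R ε x, x⟫_ℂ).re := by
    intro ε hε x
    have hb := hlb ⟨R ε x, hRmem ε hε x⟩
    rw [hres ε hε x] at hb
    have hre : (⟪R ε x, x - (ε - lam) • R ε x⟫_ℂ).re
        = (⟪R ε x, x⟫_ℂ).re - (ε - lam) * ‖R ε x‖ ^ 2 := by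
      rw [inner_sub_right, ← Complex.coe_smul, inner_smul_right,
        inner_self_eq_norm_sq_to_K (𝕜 := ℂ)]
      simp [Complex.sub_re, Complex.mul_re, ← Complex.ofReal_pow]
    simp only [hre] at hb
    nlinarith [sq_nonneg ‖R ε x‖]
  have h1 : ∀ (ε : ℝ) (hε : 0 < ε) (x : H), ε * ‖R ε x‖ ≤ ‖x‖ := by
    intro ε hε x
    have h := h0 ε hε x
    have hcs : (⟪R ε x, x⟫_ℂ).re ≤ ‖R ε x‖ * ‖x‖ := by
      simpa using re_inner_le_norm (𝕜 := ℂ) (R ε x) x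
    rcases eq_or_lt_of_le (norm_nonneg (R ε x)) with hn | hn
    · rw [← hn]; simpa using norm_nonneg x
    · nlinarith
  have hnorm_smul : ∀ (ε : ℝ), 0 < ε → ∀ v : H, ‖ε • v‖ = ε * ‖v‖ := by
    intro ε hε v
    rw [norm_smul, Real.norm_eq_abs, abs_of_pos hε]
  have hcontract : ∀ (ε : ℝ) (hε : 0 < ε) (x : H), ‖ε • R ε x‖ ≤ ‖x‖ := by
    intro ε hε x
    rw [hnorm_smul ε hε]
    exact h1 ε hε x
  have h2 : ∀ (ε : ℝ) (hε : 0 < ε) (x : H),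
      ‖A ⟨R ε x, hRmem ε hε x⟩ - lam • R ε x‖ ≤ ‖x‖ := by
    intro ε hε x
    have he : A ⟨R ε x, hRmem ε hε x⟩ - lam • R ε x = x - ε • R ε x := by
      rw [hres ε hε x]
      have : (ε - lam) • R ε x = ε • R ε x - lam • R ε x := sub_smul ε lam (R ε x)
      rw [this]; abel
    rw [he]
    have hsq : ‖x - ε • R ε x‖ ^ 2 ≤ ‖x‖ ^ 2 := by
      rw [norm_sub_sq (𝕜 := ℂ)]
      simp only [RCLike.re_to_complex]
      have hr : (⟪x, ε • R ε x⟫_ℂ).re = ε * (⟪R ε x, x⟫_ℂ).re := by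
        rw [← Complex.coe_smul, inner_smul_right]
        have hsymm : (⟪x, R ε x⟫_ℂ).re = (⟪R ε x, x⟫_ℂ).re := by
          simpa using inner_re_symm (𝕜 := ℂ) x (R ε x)
        simp [Complex.mul_re, hsymm]
      rw [hr, hnorm_smul ε hε]
      have := h0 ε hε x
      nlinarith [sq_nonneg ‖R ε x‖, sq_nonneg (ε * ‖R ε x‖)]
    have h1' := norm_nonneg (x - ε • R ε x)
    have h2' := norm_nonneg x
    nlinarith
  -- symmetry of A
  rw [LinearPMap.isSelfAdjoint_def] at hAsa
  have hsym : ∀ x y : A.domain, ⟪A x, (y : H)⟫_ℂ = ⟪(x : H), A y⟫_ℂ := by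
    have h := LinearPMap.adjoint_isFormalAdjoint (T := A) hAdense
    rw [hAsa] at h
    exact h
  have hsym' : ∀ (u v : H) (hu : u ∈ A.domain) (hv : v ∈ A.domain),
      ⟪A ⟨u, hu⟩, v⟫_ℂ = ⟪u, A ⟨v, hv⟩⟫_ℂ := fun u v hu hv => hsym ⟨u, hu⟩ ⟨v, hv⟩
  have hrel' : ∀ (u : H) (hu : u ∈ A.domain) (hu' : u ∈ B.domain),
      ‖B ⟨u, hu'⟩‖ ≤ c * (‖A ⟨u, hu⟩‖ + ‖u‖) := fun u hu hu' => hrel ⟨u, hu⟩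
  -- elements of the eigenspace are fixed by ε R ε
  have hNfix : ∀ (ε : ℝ) (hε : 0 < ε) (x : H) (hd : x ∈ A.domain),
      A ⟨x, hd⟩ = lam • x → ε • R ε x = x := by
    intro ε hε x hd hx
    have h := hRres' ε hε ⟨x, hd⟩
    have harg : A ⟨x, hd⟩ + (ε - lam) • x = ε • x := by
      rw [hx]; module
    rw [harg, (R ε).map_smul_of_tower] at h
    exact h
  -- characterization of N via R 1
  have hNchar : ∀ x : H, x ∈ N ↔ R 1 x = x := by
    intro x
    rw [hN]
    constructor
    · rintro ⟨hd, hx⟩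
      have := hNfix 1 one_pos x hd hx
      simpa using this
    · intro hx
      have hd : x ∈ A.domain := hx ▸ hRmem 1 one_pos x
      refine ⟨hd, ?_⟩
      have h := hRres 1 one_pos x
      rw [st3_pmap_congr A hx (hRmem 1 one_pos x) hd, hx] at h
      have h' := eq_sub_of_add_eq h
      rw [h']; module
  -- the eigenspace as a closed submodule
  set Nsub : Submodule ℂ H := LinearMap.ker (((R 1 : H →L[ℂ] H) - 1 : H →L[ℂ] H) : H →ₗ[ℂ] H) with hNsubdef
  have hNsubmem : ∀ x : H, x ∈ Nsub ↔ R 1 x = x := by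
    intro x
    rw [hNsubdef, LinearMap.mem_ker]
    constructor
    · intro h
      have : R 1 x - x = 0 := h
      exact sub_eq_zero.mp this
    · intro h
      show R 1 x - x = 0
      rw [h, sub_self]
  have hNset : (Nsub : Set H) = N := by
    ext x
    rw [SetLike.mem_coe, hNsubmem, hNchar]
  have hNclosed : IsClosed N := by
    rw [← hNset]
    exact ContinuousLinearMap.isClosed_ker _
  have hN_A : ∀ x ∈ N, ∃ hd : x ∈ A.domain, A ⟨x, hd⟩ = lam • x := by
    intro x hx; rwa [hN] at hx
  have hNsub_spec : ∀ x : H, x ∈ Nsub → ∃ hd : x ∈ A.domain, A ⟨x, hd⟩ = lam • x := by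
    intro x hx
    apply hN_A
    rw [← hNset]; exact hx
  have hNB : N ⊆ (B.domain : Set H) := by
    intro x hx
    obtain ⟨hd, -⟩ := hN_A x hx
    exact hAB hd
  -- R ε is selfadjoint
  have hRsym : ∀ (ε : ℝ) (hε : 0 < ε) (u v : H), ⟪R ε u, v⟫_ℂ = ⟪u, R ε v⟫_ℂ := by
    intro ε hε u v
    have e1 : ⟪R ε u, v⟫_ℂ
        = ⟪R ε u, A ⟨R ε v, hRmem ε hε v⟩⟫_ℂ + (↑(ε - lam) : ℂ) * ⟪R ε u, R ε v⟫_ℂ := by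
      conv_lhs => rw [← hRres ε hε v]
      rw [inner_add_right, ← Complex.coe_smul, inner_smul_right]
    have e2 : ⟪u, R ε v⟫_ℂ
        = ⟪A ⟨R ε u, hRmem ε hε u⟩, R ε v⟫_ℂ + (↑(ε - lam) : ℂ) * ⟪R ε u, R ε v⟫_ℂ := by
      conv_lhs => rw [← hRres ε hε u]
      rw [inner_add_left, ← Complex.coe_smul, inner_smul_left, Complex.conj_ofReal]
    rw [e1, e2]
    congr 1
    exact (hsym' (R ε u) (R ε v) (hRmem ε hε u) (hRmem ε hε v)).symm
  -- the range of (A - lam)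
  set S : A.domain →ₗ[ℂ] H := A.toFun - (lam : ℂ) • A.domain.subtype with hSdef
  have hSval : ∀ ψ : A.domain, S ψ = A ψ - lam • (ψ : H) := by
    intro ψ
    rw [hSdef]
    simp [LinearMap.sub_apply, LinearMap.smul_apply, Complex.coe_smul]
  set Msub : Submodule ℂ H := LinearMap.range S with hMsubdef
  set Mbar : Submodule ℂ H := Msub.topologicalClosure with hMbardef
  -- Mbar ⊆ Nsubᗮ
  have hMN : Mbar ≤ Nsubᗮ := by
    apply Submodule.topologicalClosure_minimal
    · rintro y ⟨ψ, rfl⟩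
      rw [Submodule.mem_orthogonal]
      intro n hn
      obtain ⟨hd, heig⟩ := hNsub_spec n hn
      rw [hSval, inner_sub_right, ← Complex.coe_smul, inner_smul_right]
      have hAn : ⟪n, A ψ⟫_ℂ = ⟪A ⟨n, hd⟩, (ψ : H)⟫_ℂ := (hsym' n ψ hd ψ.2).symm
      rw [hAn, heig, ← Complex.coe_smul, inner_smul_left, Complex.conj_ofReal]
      ring
    · exact Nsub.isClosed_orthogonal
  -- Mbarᗮ ⊆ Nsub
  have hMperp : Mbarᗮ ≤ Nsub := by
    intro z hz
    have hz' : ∀ (u : H) (hu : u ∈ A.domain), ⟪A ⟨u, hu⟩ - lam • u, z⟫_ℂ = 0 := by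
      intro u hu
      have hmem : S ⟨u, hu⟩ ∈ Mbar := Msub.le_topologicalClosure ⟨⟨u, hu⟩, rfl⟩
      have h := (Submodule.mem_orthogonal _ z).mp hz _ hmem
      rwa [hSval] at h
    have key : ∀ u : H, ⟪u, R 1 z - z⟫_ℂ = 0 := by
      intro u
      rw [inner_sub_right, ← hRsym 1 one_pos u z, ← inner_sub_left]
      have hdif : R 1 u - u = -(A ⟨R 1 u, hRmem 1 one_pos u⟩ - lam • R 1 u) := by
        rw [hres 1 one_pos u]; module
      rw [hdif, inner_neg_left, hz' (R 1 u) (hRmem 1 one_pos u), neg_zero]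
    have h0' := key (R 1 z - z)
    rw [inner_self_eq_zero] at h0'
    exact (hNsubmem z).mpr (sub_eq_zero.mp h0')
  -- Nsubᗮ ⊆ Mbar
  haveI : CompleteSpace Mbar :=
    (Submodule.isClosed_topologicalClosure Msub).completeSpace_coe
  have hNperpM : Nsubᗮ ≤ Mbar := by
    have h := Submodule.orthogonal_le hMperp
    rwa [Submodule.orthogonal_orthogonal Mbar] at h
  -- the projection
  haveI : CompleteSpace Nsub := by
    have : IsClosed (Nsub : Set H) := by rw [hNset]; exact hNclosed
    exact this.completeSpace_coe
  set Pc : H →L[ℂ] H := Nsub.subtypeL.comp (Submodule.orthogonalProjection Nsub) with hPcdef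
  have hPcmem : ∀ x : H, Pc x ∈ Nsub := fun x => (Submodule.orthogonalProjection Nsub x).2
  have hPcA : ∀ x : H, Pc x ∈ A.domain := fun x => (hNsub_spec _ (hPcmem x)).choose
  have hPdomB : ∀ x : H, Pc x ∈ B.domain := fun x => hAB (hPcA x)
  have hPcfix : ∀ (ε : ℝ) (hε : 0 < ε) (x : H), ε • R ε (Pc x) = Pc x := by
    intro ε hε x
    obtain ⟨hd, heig⟩ := hNsub_spec _ (hPcmem x)
    exact hNfix ε hε _ hd heig
  have hPeq : ∀ x : H, x ∈ Nsub → Pc x = x := fun x hx =>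
    Submodule.starProjection_eq_self_iff.mpr hx
  have hPorth : ∀ x : H, x - Pc x ∈ Nsubᗮ := fun x =>
    Submodule.sub_starProjection_mem_orthogonal (K := Nsub) x
  have hMbar_sub : ∀ v : H, v ∈ Mbar → v ∈ closure (Msub : Set H) := by
    intro v hv
    rwa [← Submodule.topologicalClosure_coe]
  have hMsub_ex : ∀ m : H, m ∈ Msub → ∃ ψ : A.domain, A ψ - lam • (ψ : H) = m := by
    rintro m ⟨ψ, rfl⟩
    exact ⟨ψ, (hSval ψ).symm⟩
  clear_value S Msub Mbar Pc
  -- strong convergence ε R ε x → P x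
  have hconv : ∀ (x : H) (η : ℝ), 0 < η → ∃ ε₁ : ℝ, 0 < ε₁ ∧
      ∀ (ε : ℝ), 0 < ε → ε < ε₁ → ‖ε • R ε x - Pc x‖ < η := by
    intro x η hη
    have hy : x - Pc x ∈ Mbar := hNperpM (hPorth x)
    have hy' : x - Pc x ∈ closure (Msub : Set H) := hMbar_sub _ hy
    rw [Metric.mem_closure_iff] at hy'
    obtain ⟨m, hmM, hmd⟩ := hy' (η / 2) (by positivity)
    obtain ⟨ψ, hψ⟩ := hMsub_ex m hmM
    refine ⟨η / (4 * (‖(ψ : H)‖ + 1)), by positivity, ?_⟩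
    intro ε hεpos hεlt
    have e0 : ε • R ε x - Pc x = ε • R ε (x - Pc x) := by
      rw [map_sub, smul_sub, hPcfix ε hεpos x]
    have hm : ε • R ε m = ε • (ψ : H) - ε • (ε • R ε (ψ : H)) := by
      have hm1 : m = (A ψ + (ε - lam) • (ψ : H)) - ε • (ψ : H) := by
        rw [← hψ]; module
      rw [hm1, map_sub, hRres' ε hεpos ψ, (R ε).map_smul_of_tower, smul_sub]
    have hbm : ‖ε • R ε m‖ ≤ 2 * ε * ‖(ψ : H)‖ := by
      rw [hm]
      calc ‖ε • (ψ : H) - ε • (ε • R ε (ψ : H))‖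
          ≤ ‖ε • (ψ : H)‖ + ‖ε • (ε • R ε (ψ : H))‖ := norm_sub_le _ _
        _ ≤ ε * ‖(ψ : H)‖ + ε * ‖(ψ : H)‖ := by
            rw [hnorm_smul ε hεpos, hnorm_smul ε hεpos]
            have := hcontract ε hεpos (ψ : H)
            have hε' := hεpos.le
            nlinarith
        _ = 2 * ε * ‖(ψ : H)‖ := by ring
    have hsplit : ε • R ε (x - Pc x) = ε • R ε ((x - Pc x) - m) + ε • R ε m := by
      rw [← smul_add, ← map_add, sub_add_cancel]
    have hb1 : ‖ε • R ε ((x - Pc x) - m)‖ ≤ ‖(x - Pc x) - m‖ := hcontract ε hεpos _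
    have hd1 : ‖(x - Pc x) - m‖ < η / 2 := by
      rw [← dist_eq_norm]
      exact hmd
    have hb2 : 2 * ε * ‖(ψ : H)‖ < η / 2 := by
      have hlt : ε < η / (4 * (‖(ψ : H)‖ + 1)) := hεlt
      have hψn : (0 : ℝ) ≤ ‖(ψ : H)‖ := norm_nonneg _
      have h4 : 0 < 4 * (‖(ψ : H)‖ + 1) := by positivity
      rw [lt_div_iff₀ h4] at hlt
      nlinarith only [hlt, hψn, hεpos]
    calc ‖ε • R ε x - Pc x‖ = ‖ε • R ε ((x - Pc x) - m) + ε • R ε m‖ := by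
          rw [e0, hsplit]
      _ ≤ ‖ε • R ε ((x - Pc x) - m)‖ + ‖ε • R ε m‖ := norm_add_le _ _
      _ ≤ ‖(x - Pc x) - m‖ + (2 * ε * ‖(ψ : H)‖) := add_le_add hb1 hbm
      _ < η / 2 + η / 2 := add_lt_add hd1 hb2
      _ = η := by ring
  -- uniform bound for B (ε R ε x)
  have hBbound : ∀ (ε : ℝ) (hε : 0 < ε) (x : H) (p : ε • R ε x ∈ B.domain),
      ‖B ⟨ε • R ε x, p⟩‖ ≤ c * (ε + |lam| + 1) * ‖x‖ := by
    intro ε hε x p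
    have hmemA : ε • R ε x ∈ A.domain :=
      A.domain.smul_of_tower_mem ε (hRmem ε hε x)
    have hb := hrel' (ε • R ε x) hmemA p
    have hAval : A ⟨ε • R ε x, hmemA⟩ = ε • A ⟨R ε x, hRmem ε hε x⟩ :=
      st3_pmap_smul_real A ε (hRmem ε hε x) hmemA
    have hAsplit : A ⟨ε • R ε x, hmemA⟩
        = ε • (A ⟨R ε x, hRmem ε hε x⟩ - lam • R ε x) + lam • (ε • R ε x) := by
      rw [hAval]; module
    have hAbound : ‖A ⟨ε • R ε x, hmemA⟩‖ ≤ ε * ‖x‖ + |lam| * ‖x‖ := by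
      rw [hAsplit]
      calc ‖ε • (A ⟨R ε x, hRmem ε hε x⟩ - lam • R ε x) + lam • (ε • R ε x)‖
          ≤ ‖ε • (A ⟨R ε x, hRmem ε hε x⟩ - lam • R ε x)‖ + ‖lam • (ε • R ε x)‖ :=
            norm_add_le _ _
        _ ≤ ε * ‖x‖ + |lam| * ‖x‖ := by
            rw [hnorm_smul ε hε, norm_smul lam, Real.norm_eq_abs]
            have hb1 := h2 ε hε x
            have hb2 := hcontract ε hε x
            have := abs_nonneg lam
            have := hε.le
            nlinarith
    have hnrm := hcontract ε hε x
    calc ‖B ⟨ε • R ε x, p⟩‖ ≤ c * (‖A ⟨ε • R ε x, hmemA⟩‖ + ‖ε • R ε x‖) := hb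
      _ ≤ c * ((ε * ‖x‖ + |lam| * ‖x‖) + ‖x‖) := by
          apply mul_le_mul_of_nonneg_left _ hc
          exact add_le_add hAbound hnrm
      _ = c * (ε + |lam| + 1) * ‖x‖ := by ring
  -- convergence of B (ε R ε x) to B (P x)
  have hkey : ∀ (x : H) (δ : ℝ), 0 < δ → ∃ ε₀ : ℝ, 0 < ε₀ ∧
      ∀ (ε : ℝ) (hε : 0 < ε), ε < ε₀ →
        ∀ (p : ε • R ε x ∈ B.domain) (q : Pc x ∈ B.domain),
          ‖B ⟨ε • R ε x, p⟩ - B ⟨Pc x, q⟩‖ < δ := by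
    intro x δ hδ
    obtain ⟨hdP, heigP⟩ := hNsub_spec _ (hPcmem x)
    obtain ⟨ε₁, hε₁, hconv₁⟩ := hconv x (δ / (2 * (c + 1) * (|lam| + 1))) (by positivity)
    refine ⟨min ε₁ (δ / (2 * (c + 1) * (‖x‖ + 1))), lt_min hε₁ (by positivity), ?_⟩
    intro ε hε hεlt p q
    have hεlt₁ : ε < ε₁ := lt_of_lt_of_le hεlt (min_le_left _ _)
    have hεlt₂ : ε < δ / (2 * (c + 1) * (‖x‖ + 1)) :=
      lt_of_lt_of_le hεlt (min_le_right _ _)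
    have hw := hconv₁ ε hε hεlt₁
    set w : H := ε • R ε x - Pc x with hwdef
    have hmem1 : ε • R ε x ∈ A.domain := A.domain.smul_of_tower_mem ε (hRmem ε hε x)
    have hwA : w ∈ A.domain := sub_mem hmem1 hdP
    have hwB : w ∈ B.domain := hAB hwA
    have hBdiff : B ⟨ε • R ε x, p⟩ - B ⟨Pc x, q⟩ = B ⟨w, hwB⟩ :=
      (st3_pmap_sub B p q hwB).symm
    have hAw : A ⟨w, hwA⟩
        = ε • (A ⟨R ε x, hRmem ε hε x⟩ - lam • R ε x) + lam • w := by
      rw [st3_pmap_sub A hmem1 hdP hwA,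
        st3_pmap_smul_real A ε (hRmem ε hε x) hmem1, heigP, hwdef]
      module
    have hAwb : ‖A ⟨w, hwA⟩‖ ≤ ε * ‖x‖ + |lam| * ‖w‖ := by
      rw [hAw]
      calc ‖ε • (A ⟨R ε x, hRmem ε hε x⟩ - lam • R ε x) + lam • w‖
          ≤ ‖ε • (A ⟨R ε x, hRmem ε hε x⟩ - lam • R ε x)‖ + ‖lam • w‖ := norm_add_le _ _
        _ ≤ ε * ‖x‖ + |lam| * ‖w‖ := by
            rw [hnorm_smul ε hε, norm_smul lam, Real.norm_eq_abs]
            have hb1 := h2 ε hε x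
            have := hε.le
            nlinarith
    have hBb : ‖B ⟨w, hwB⟩‖ ≤ c * ((ε * ‖x‖ + |lam| * ‖w‖) + ‖w‖) := by
      calc ‖B ⟨w, hwB⟩‖ ≤ c * (‖A ⟨w, hwA⟩‖ + ‖w‖) := hrel' w hwA hwB
        _ ≤ c * ((ε * ‖x‖ + |lam| * ‖w‖) + ‖w‖) := by
            apply mul_le_mul_of_nonneg_left _ hc
            exact add_le_add hAwb le_rfl
    rw [hBdiff]
    have hwn : (0 : ℝ) ≤ ‖w‖ := norm_nonneg _
    have hxn : (0 : ℝ) ≤ ‖x‖ := norm_nonneg _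
    have hl : (0 : ℝ) ≤ |lam| := abs_nonneg _
    have ht1 : c * (ε * ‖x‖) < δ / 2 := by
      have h2' : 0 < 2 * (c + 1) * (‖x‖ + 1) := by positivity
      rw [lt_div_iff₀ h2'] at hεlt₂
      nlinarith
    have ht2 : c * (|lam| * ‖w‖ + ‖w‖) < δ / 2 := by
      have h2' : 0 < 2 * (c + 1) * (|lam| + 1) := by positivity
      rw [lt_div_iff₀ h2'] at hw
      nlinarith
    calc ‖B ⟨w, hwB⟩‖ ≤ c * ((ε * ‖x‖ + |lam| * ‖w‖) + ‖w‖) := hBb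
      _ = c * (ε * ‖x‖) + c * (|lam| * ‖w‖ + ‖w‖) := by ring
      _ < δ / 2 + δ / 2 := add_lt_add ht1 ht2
      _ = δ := by ring
  refine ⟨⟨hNclosed, hNB⟩, ?_, ?_⟩
  · -- part (b)
    intro Ω hΩ
    obtain ⟨rΩ, hrΩ⟩ := hΩ.subset_closedBall 0
    obtain ⟨M, hM⟩ := (isCompact_closedBall (0 : EuclideanSpace ℝ (Fin ν)) rΩ).exists_bound_of_continuousOn hωcont.continuousOn
    refine ⟨c * (max M 0 + |lam| + 1) * 1, by positivity, ?_⟩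
    intro x k hk hk0
    have hε := hωpos k hk0
    have hωk : ω k ≤ max M 0 := by
      have := hM k (hrΩ hk)
      rw [Real.norm_eq_abs] at this
      exact le_trans (le_abs_self _) (le_trans this (le_max_left _ _))
    calc ‖B ⟨ω k • R (ω k) x, B.domain.smul_of_tower_mem (ω k)
            (hAB (hRmem (ω k) (hωpos k hk0) x))⟩‖
        ≤ c * (ω k + |lam| + 1) * ‖x‖ := hBbound (ω k) hε x _
      _ ≤ c * (max M 0 + |lam| + 1) * 1 * ‖x‖ := by
          rw [mul_one]
          apply mul_le_mul_of_nonneg_right _ (norm_nonneg x)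
          apply mul_le_mul_of_nonneg_left _ hc
          linarith
  · -- part (c)
    refine ⟨Pc, hPdomB, ?_, ?_, ?_, ?_⟩
    · intro x
      rw [← hNset]
      exact hPcmem x
    · intro x hx
      have hx' : x ∈ Nsub := by rw [← hNset] at hx; exact hx
      exact hPeq x hx'
    · intro x y hy
      have hy' : y ∈ Nsub := by rw [← hNset] at hy; exact hy
      exact Submodule.inner_left_of_mem_orthogonal hy' (hPorth x)
    · intro x δ hδ
      obtain ⟨ε₀, hε₀, hball⟩ := hkey x δ hδ
      have hc0 : ContinuousAt ω 0 := hωcont.continuousAt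
      rw [Metric.continuousAt_iff] at hc0
      obtain ⟨r, hr, hrb⟩ := hc0 ε₀ hε₀
      refine ⟨r, hr, ?_⟩
      intro k hk0 hkr
      have hdk : dist k 0 < r := by rwa [dist_zero_right]
      have hdω := hrb hdk
      rw [hω0, dist_zero_right, Real.norm_eq_abs, abs_of_pos (hωpos k hk0)] at hdω
      exact hball (ω k) (hωpos k hk0) hdω _ _
end

section
/- Fix ν ≥ 1. For every ε > 0 there exists a constant C ≥ 0 such that for all real a ≥ 0 and all ξ, b ∈ ℝ^ν: (1 + a + ‖ξ − b‖²)^{1/4} ≤ ε·(1 + a^{1/2} + ‖b‖^{2/3}) + C·(1 + ‖ξ‖^{1/2}). -/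
lemma real_rpow_add_le (x y : ℝ) (hx : 0 ≤ x) (hy : 0 ≤ y) {p : ℝ} (hp : 0 ≤ p) (hp1 : p ≤ 1) :
    (x + y) ^ p ≤ x ^ p + y ^ p := by
  have key := NNReal.rpow_add_le_add_rpow x.toNNReal y.toNNReal hp hp1
  have h : ((x.toNNReal + y.toNNReal : NNReal) : ℝ) = x + y := by
    push_cast
    rw [Real.coe_toNNReal _ hx, Real.coe_toNNReal _ hy]
  calc (x + y) ^ p = ((x.toNNReal + y.toNNReal : NNReal) : ℝ) ^ p := by rw [h]
    _ = (((x.toNNReal + y.toNNReal) ^ p : NNReal) : ℝ) := by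
        rw [NNReal.coe_rpow]
    _ ≤ ((x.toNNReal ^ p + y.toNNReal ^ p : NNReal) : ℝ) := by exact_mod_cast key
    _ = x ^ p + y ^ p := by
        push_cast
        rw [Real.coe_toNNReal _ hx, Real.coe_toNNReal _ hy]

lemma aux_rpow (ε t p q : ℝ) (hε : 0 < ε) (ht : 0 ≤ t) (hp : 0 < p) (hpq : p < q) :
    t ^ p ≤ ε * t ^ q + (1/ε) ^ (p/(q-p)) := by
  set s : ℝ := (1/ε) ^ (1/(q-p)) with hs
  have hqp : 0 < q - p := by linarith
  have hspos : 0 ≤ s := Real.rpow_nonneg (by positivity) _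
  rcases le_or_gt t s with h | h
  · have h1 : t ^ p ≤ s ^ p := Real.rpow_le_rpow ht h hp.le
    have h2 : s ^ p = (1/ε) ^ (p/(q-p)) := by
      rw [hs, ← Real.rpow_mul (by positivity)]
      congr 1
      field_simp
    have : 0 ≤ ε * t ^ q := by positivity
    nlinarith [h1, h2.le, h2.ge]
  · have hts : 0 < t := lt_of_le_of_lt hspos h
    have h1 : (1/ε) ≤ t ^ (q - p) := by
      have : s ^ (q-p) ≤ t ^ (q-p) := Real.rpow_le_rpow hspos h.le hqp.le
      rwa [hs, ← Real.rpow_mul (by positivity), one_div_mul_cancel (by positivity),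
        Real.rpow_one] at this
    have h2 : t ^ p * (1/ε) ≤ t ^ p * t ^ (q - p) :=
      mul_le_mul_of_nonneg_left h1 (by positivity)
    rw [← Real.rpow_add hts] at h2
    have h3 : p + (q - p) = q := by ring
    rw [h3] at h2
    have h4 : t ^ p ≤ ε * t ^ q := by
      have := mul_le_mul_of_nonneg_left h2 hε.le
      calc t ^ p = ε * (t ^ p * (1/ε)) := by field_simp
        _ ≤ ε * t ^ q := this
    have : 0 ≤ (1/ε) ^ (p/(q-p)) := by positivity
    linarith

/-- For fixed `ν ≥ 1` and every `ε > 0` there is `C ≥ 0` such that for all `a ≥ 0`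
and all `ξ, b ∈ ℝ^ν`:
`(1 + a + ‖ξ − b‖²)^{1/4} ≤ ε(1 + a^{1/2} + ‖b‖^{2/3}) + C(1 + ‖ξ‖^{1/2})`. -/
theorem statement_6 (ν : ℕ) (hν : 1 ≤ ν) (ε : ℝ) (hε : 0 < ε) :
    ∃ C : ℝ, 0 ≤ C ∧ ∀ a : ℝ, 0 ≤ a → ∀ ξ b : EuclideanSpace ℝ (Fin ν),
      (1 + a + ‖ξ - b‖ ^ 2) ^ ((1 : ℝ) / 4) ≤
        ε * (1 + a ^ ((1 : ℝ) / 2) + ‖b‖ ^ ((2 : ℝ) / 3)) +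
          C * (1 + ‖ξ‖ ^ ((1 : ℝ) / 2)) := by
  set K1 : ℝ := (1/ε) ^ ((1/4 : ℝ)/((1/2 : ℝ) - 1/4)) with hK1
  set K2 : ℝ := (1/ε) ^ ((1/2 : ℝ)/((2/3 : ℝ) - 1/2)) with hK2
  have hK1n : 0 ≤ K1 := Real.rpow_nonneg (by positivity) _
  have hK2n : 0 ≤ K2 := Real.rpow_nonneg (by positivity) _
  refine ⟨1 + K1 + K2, by positivity, ?_⟩
  intro a ha ξ b
  have hn1 : (0:ℝ) ≤ ‖ξ - b‖ ^ 2 := by positivity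
  have step1 : (1 + a + ‖ξ - b‖ ^ 2) ^ ((1:ℝ)/4)
      ≤ 1 + a ^ ((1:ℝ)/4) + (‖ξ - b‖ ^ 2) ^ ((1:ℝ)/4) := by
    calc (1 + a + ‖ξ - b‖ ^ 2) ^ ((1:ℝ)/4)
        ≤ (1 + a) ^ ((1:ℝ)/4) + (‖ξ - b‖ ^ 2) ^ ((1:ℝ)/4) :=
          real_rpow_add_le _ _ (by linarith) hn1 (by norm_num) (by norm_num)
      _ ≤ (1 ^ ((1:ℝ)/4) + a ^ ((1:ℝ)/4)) + (‖ξ - b‖ ^ 2) ^ ((1:ℝ)/4) := by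
          gcongr; exact real_rpow_add_le 1 a one_pos.le ha (by norm_num) (by norm_num)
      _ = 1 + a ^ ((1:ℝ)/4) + (‖ξ - b‖ ^ 2) ^ ((1:ℝ)/4) := by
          rw [Real.one_rpow]
  have step2 : (‖ξ - b‖ ^ 2) ^ ((1:ℝ)/4) ≤ ‖ξ‖ ^ ((1:ℝ)/2) + ‖b‖ ^ ((1:ℝ)/2) := by
    have h1 : (‖ξ - b‖ ^ 2) ^ ((1:ℝ)/4) = ‖ξ - b‖ ^ ((1:ℝ)/2) := by
      rw [← Real.rpow_natCast ‖ξ - b‖ 2, ← Real.rpow_mul (norm_nonneg _)]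
      norm_num
    rw [h1]
    calc ‖ξ - b‖ ^ ((1:ℝ)/2) ≤ (‖ξ‖ + ‖b‖) ^ ((1:ℝ)/2) :=
        Real.rpow_le_rpow (norm_nonneg _) (norm_sub_le _ _) (by norm_num)
      _ ≤ ‖ξ‖ ^ ((1:ℝ)/2) + ‖b‖ ^ ((1:ℝ)/2) :=
        real_rpow_add_le _ _ (norm_nonneg _) (norm_nonneg _) (by norm_num) (by norm_num)
  have step3 : a ^ ((1:ℝ)/4) ≤ ε * a ^ ((1:ℝ)/2) + K1 :=
    aux_rpow ε a (1/4) (1/2) hε ha (by norm_num) (by norm_num)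
  have step4 : ‖b‖ ^ ((1:ℝ)/2) ≤ ε * ‖b‖ ^ ((2:ℝ)/3) + K2 :=
    aux_rpow ε ‖b‖ (1/2) (2/3) hε (norm_nonneg _) (by norm_num) (by norm_num)
  have hξ : 0 ≤ ‖ξ‖ ^ ((1:ℝ)/2) := Real.rpow_nonneg (norm_nonneg _) _
  nlinarith [step1, step2, step3, step4, mul_nonneg (add_nonneg (add_nonneg one_pos.le hK1n) hK2n) hξ, hε.le, hξ]
end

section
/- Let ν ≥ 1 and let ω, v : ℝ^ν → ℝ be measurable with ω ≥ 0. Let σ > 0 be such that m_σ := inf{ω(k) : ‖k‖ ≥ σ} > 0, and assume: ∫_{‖k‖>σ} v(k)²/(ω(k)^{1/2}(1+‖k‖²)) dk < ∞, ∫_{‖k‖>σ} v(k)²·ω(k)/(1+‖k‖²)² dk < ∞, and there is M > 0 with ω(k) ≤ M(1+‖k‖²) for all k ∈ ℝ^ν. For K ≥ σ define B_K : ℝ^ν → ℝ by B_K(k) = v(k)/(ω(k)+‖k‖²) if ‖k‖ ≥ K and B_K(k) = 0 otherwise. Then for every K ≥ σ the following functions are square-integrable on ℝ^ν with respect to Lebesgue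 measure: (a) k ↦ ω(k)^{1/2}·B_K(k); (b) k ↦ ω(k)^{-1/2}·‖k‖·B_K(k); (c) k ↦ ‖k‖^s·B_K(k) for every s ∈ [0, 2/3]. -/
open MeasureTheory


lemma aux_a (σ n w V : ℝ) (hσ : 0 < σ) (hn : σ ≤ n) (hw : 0 < w) :
    (w ^ ((1:ℝ)/2) * (V / (w + n ^ 2))) ^ 2
      ≤ (1 + σ⁻¹ ^ 2) ^ 2 * (V ^ 2 * w / (1 + n ^ 2) ^ 2) := by
  have hn0 : 0 < n := hσ.trans_le hn
  have hd : 0 < w + n ^ 2 := by positivity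
  have ht : (0:ℝ) < 1 + n ^ 2 := by positivity
  have hinv : σ * σ⁻¹ = 1 := mul_inv_cancel₀ hσ.ne'
  have hσn : σ ^ 2 ≤ n ^ 2 := pow_le_pow_left₀ hσ.le hn 2
  have key : 1 + n ^ 2 ≤ (1 + σ⁻¹ ^ 2) * (w + n ^ 2) := by
    nlinarith [sq_nonneg σ⁻¹, hw.le, mul_pos hσ hσ]
  have hsq : (w ^ ((1:ℝ)/2)) ^ 2 = w := by
    rw [← Real.rpow_natCast (w ^ ((1:ℝ)/2)) 2, ← Real.rpow_mul hw.le]; norm_num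
  rw [mul_pow, div_pow, hsq, mul_div_assoc', mul_div_assoc',
    div_le_div_iff₀ (by positivity) (by positivity)]
  have h2 : (1 + n ^ 2) * (1 + n ^ 2)
      ≤ ((1 + σ⁻¹ ^ 2) * (w + n ^ 2)) * ((1 + σ⁻¹ ^ 2) * (w + n ^ 2)) :=
    mul_self_le_mul_self ht.le key
  nlinarith [mul_nonneg hw.le (sq_nonneg V), h2, sq_nonneg V]

lemma aux_b (σ n w V m : ℝ) (hσ : 0 < σ) (hn : σ ≤ n) (hm : 0 < m) (hmw : m ≤ w) :
    (w ^ (-(1:ℝ)/2) * n * (V / (w + n ^ 2))) ^ 2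
      ≤ ((1 + σ⁻¹ ^ 2) / m ^ ((1:ℝ)/2)) * (V ^ 2 / (w ^ ((1:ℝ)/2) * (1 + n ^ 2))) := by
  have hw : 0 < w := hm.trans_le hmw
  have hn0 : 0 < n := hσ.trans_le hn
  have hd : 0 < w + n ^ 2 := by positivity
  have ht : (0:ℝ) < 1 + n ^ 2 := by positivity
  set r := w ^ ((1:ℝ)/2) with hr
  set q := m ^ ((1:ℝ)/2) with hq
  have hrpos : 0 < r := Real.rpow_pos_of_pos hw _
  have hqpos : 0 < q := Real.rpow_pos_of_pos hm _
  have hqr : q ≤ r := Real.rpow_le_rpow hm.le hmw (by norm_num)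
  have hrr : r * r = w := by
    rw [hr, ← Real.rpow_add hw]; norm_num
  have hneg : w ^ (-(1:ℝ)/2) = r⁻¹ := by
    rw [hr, ← Real.rpow_neg_one (w ^ ((1:ℝ)/2)), ← Real.rpow_mul hw.le]; norm_num
  have hinv : σ * σ⁻¹ = 1 := mul_inv_cancel₀ hσ.ne'
  have hσn : σ ^ 2 ≤ n ^ 2 := pow_le_pow_left₀ hσ.le hn 2
  have key : 1 + n ^ 2 ≤ (1 + σ⁻¹ ^ 2) * n ^ 2 := by
    nlinarith [sq_nonneg σ⁻¹, mul_pos hσ hσ]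
  have hn4 : (n ^ 2) ^ 2 ≤ (w + n ^ 2) ^ 2 := by nlinarith [hw.le]
  have hC : (0:ℝ) < 1 + σ⁻¹ ^ 2 := by positivity
  rw [hneg]
  have hL : (r⁻¹ * n * (V / (w + n ^ 2))) ^ 2
      = n ^ 2 * V ^ 2 / (r * r * (w + n ^ 2) ^ 2) := by
    field_simp
  have hR : ((1 + σ⁻¹ ^ 2) / q) * (V ^ 2 / (r * (1 + n ^ 2)))
      = (1 + σ⁻¹ ^ 2) * V ^ 2 / (q * (r * (1 + n ^ 2))) := div_mul_div_comm _ _ _ _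
  rw [hL, hR, div_le_div_iff₀ (by positivity) (by positivity)]
  have hA : (0:ℝ) ≤ V ^ 2 * (q * r) * n ^ 2 :=
    mul_nonneg (mul_nonneg (sq_nonneg V) (mul_nonneg hqpos.le hrpos.le)) (sq_nonneg n)
  have X1 := mul_le_mul_of_nonneg_left key hA
  have X2 := mul_le_mul_of_nonneg_left hqr
    (by positivity : (0:ℝ) ≤ (1 + σ⁻¹ ^ 2) * V ^ 2 * r * (n ^ 2) ^ 2)
  have X3 := mul_le_mul_of_nonneg_left hn4
    (by positivity : (0:ℝ) ≤ (1 + σ⁻¹ ^ 2) * V ^ 2 * (r * r))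
  linarith [X1, X2, X3]

lemma aux_c (σ n w V s : ℝ) (hσ : 0 < σ) (hn : σ ≤ n) (hw : 0 < w)
    (hs0 : 0 ≤ s) (hs2 : s ≤ 2/3) :
    (n ^ s * (V / (w + n ^ 2))) ^ 2
      ≤ (1 + σ⁻¹ ^ 2) ^ 2 *
        (V ^ 2 / (w ^ ((1:ℝ)/2) * (1 + n ^ 2)) + V ^ 2 * w / (1 + n ^ 2) ^ 2) := by
  have hn0 : 0 < n := hσ.trans_le hn
  have hd : 0 < w + n ^ 2 := by positivity
  have ht : (0:ℝ) < 1 + n ^ 2 := by positivity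
  have ht1 : (1:ℝ) ≤ 1 + n ^ 2 := by nlinarith [sq_nonneg n]
  set t := 1 + n ^ 2 with htdef
  have hC : (0:ℝ) < 1 + σ⁻¹ ^ 2 := by positivity
  have hinv : σ * σ⁻¹ = 1 := mul_inv_cancel₀ hσ.ne'
  have hσn : σ ^ 2 ≤ n ^ 2 := pow_le_pow_left₀ hσ.le hn 2
  have key : t ≤ (1 + σ⁻¹ ^ 2) * (w + n ^ 2) := by
    rw [htdef]; nlinarith [sq_nonneg σ⁻¹, hw.le, mul_pos hσ hσ]
  have hns : (n ^ s) ^ 2 ≤ t ^ ((2:ℝ)/3) := by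
    have e1 : (n ^ s) ^ 2 = ((n:ℝ) ^ (2:ℝ)) ^ s := by
      rw [← Real.rpow_natCast (n ^ s) 2, ← Real.rpow_mul hn0.le, ← Real.rpow_mul hn0.le]
      norm_num [mul_comm]
    rw [e1]
    have e2 : (n:ℝ) ^ (2:ℝ) = n ^ 2 := by
      rw [← Real.rpow_natCast n 2]; norm_num
    calc ((n:ℝ) ^ (2:ℝ)) ^ s ≤ t ^ s := by
          apply Real.rpow_le_rpow (by positivity) _ hs0
          rw [e2, htdef]; linarith
      _ ≤ t ^ ((2:ℝ)/3) := Real.rpow_le_rpow_of_exponent_le ht1 hs2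
  have hcore : V ^ 2 * t ^ (-(4:ℝ)/3)
      ≤ V ^ 2 / (w ^ ((1:ℝ)/2) * t) + V ^ 2 * w / t ^ 2 := by
    have htm : t ^ (-(4:ℝ)/3) = 1 / t ^ ((4:ℝ)/3) := by
      rw [one_div, ← Real.rpow_neg ht.le]; norm_num
    rcases le_total w (t ^ ((2:ℝ)/3)) with hcase | hcase
    · have h1 : w ^ ((1:ℝ)/2) ≤ t ^ ((1:ℝ)/3) := by
        calc w ^ ((1:ℝ)/2) ≤ (t ^ ((2:ℝ)/3)) ^ ((1:ℝ)/2) :=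
              Real.rpow_le_rpow hw.le hcase (by norm_num)
          _ = t ^ ((1:ℝ)/3) := by rw [← Real.rpow_mul ht.le]; norm_num
      have h2 : w ^ ((1:ℝ)/2) * t ≤ t ^ ((4:ℝ)/3) := by
        calc w ^ ((1:ℝ)/2) * t ≤ t ^ ((1:ℝ)/3) * t :=
              mul_le_mul_of_nonneg_right h1 ht.le
          _ = t ^ ((4:ℝ)/3) := by
              rw [show ((4:ℝ)/3) = 1/3 + 1 by norm_num, Real.rpow_add ht, Real.rpow_one]
      have hb : V ^ 2 * t ^ (-(4:ℝ)/3) ≤ V ^ 2 / (w ^ ((1:ℝ)/2) * t) := by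
        rw [htm, mul_one_div]
        exact div_le_div_of_nonneg_left (sq_nonneg V) (by positivity) h2
      have hf2 : 0 ≤ V ^ 2 * w / t ^ 2 := by positivity
      linarith
    · have h2 : t ^ 2 ≤ w * t ^ ((4:ℝ)/3) := by
        have e3 : (t:ℝ) ^ 2 = t ^ ((2:ℝ)/3) * t ^ ((4:ℝ)/3) := by
          rw [← Real.rpow_add ht, ← Real.rpow_natCast t 2]; norm_num
        rw [e3]
        exact mul_le_mul_of_nonneg_right hcase (by positivity)
      have hb : V ^ 2 * t ^ (-(4:ℝ)/3) ≤ V ^ 2 * w / t ^ 2 := by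
        rw [htm, mul_one_div, div_le_div_iff₀ (by positivity) (by positivity)]
        calc V ^ 2 * t ^ 2 ≤ V ^ 2 * (w * t ^ ((4:ℝ)/3)) :=
              mul_le_mul_of_nonneg_left h2 (sq_nonneg V)
          _ = V ^ 2 * w * t ^ ((4:ℝ)/3) := by ring
      have hf1 : 0 ≤ V ^ 2 / (w ^ ((1:ℝ)/2) * t) := by positivity
      linarith
  have step : (n ^ s * (V / (w + n ^ 2))) ^ 2
      ≤ (1 + σ⁻¹ ^ 2) ^ 2 * (V ^ 2 * t ^ (-(4:ℝ)/3)) := by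
    rw [mul_pow, div_pow]
    have hkey2 : t * t ≤ ((1 + σ⁻¹ ^ 2) * (w + n ^ 2)) * ((1 + σ⁻¹ ^ 2) * (w + n ^ 2)) :=
      mul_self_le_mul_self ht.le key
    have e4 : t ^ (-(4:ℝ)/3) = t ^ ((2:ℝ)/3) / t ^ 2 := by
      rw [← Real.rpow_natCast t 2, ← Real.rpow_sub ht]; norm_num
    rw [e4]
    have hstep1 : (n ^ s) ^ 2 * (V ^ 2 / (w + n ^ 2) ^ 2)
        ≤ t ^ ((2:ℝ)/3) * (V ^ 2 / (w + n ^ 2) ^ 2) :=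
      mul_le_mul_of_nonneg_right hns (by positivity)
    have hstep2 : t ^ ((2:ℝ)/3) * (V ^ 2 / (w + n ^ 2) ^ 2)
        ≤ (1 + σ⁻¹ ^ 2) ^ 2 * (V ^ 2 * (t ^ ((2:ℝ)/3) / t ^ 2)) := by
      have e5 : t ^ ((2:ℝ)/3) * (V ^ 2 / (w + n ^ 2) ^ 2)
          = t ^ ((2:ℝ)/3) * V ^ 2 / (w + n ^ 2) ^ 2 := by ring
      have e6 : (1 + σ⁻¹ ^ 2) ^ 2 * (V ^ 2 * (t ^ ((2:ℝ)/3) / t ^ 2))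
          = (1 + σ⁻¹ ^ 2) ^ 2 * V ^ 2 * t ^ ((2:ℝ)/3) / t ^ 2 := by ring
      rw [e5, e6, div_le_div_iff₀ (by positivity) (pow_pos ht 2)]
      have hnn : 0 ≤ t ^ ((2:ℝ)/3) * V ^ 2 :=
        mul_nonneg (Real.rpow_nonneg ht.le _) (sq_nonneg V)
      nlinarith [mul_le_mul_of_nonneg_left hkey2 hnn]
    linarith
  calc (n ^ s * (V / (w + n ^ 2))) ^ 2 ≤ _ := step
    _ ≤ _ := mul_le_mul_of_nonneg_left hcore (by positivity)

/-- Regularity of the Gross-transformation kernel `B_K(k) = 1_{‖k‖≥K} v(k)/(ω(k)+‖k‖²)`.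
Under Hypothesis 2(1), 2(3) of the paper, for every `K ≥ σ` the functions
`ω^{1/2}B_K`, `ω^{-1/2}|k|B_K` and `|k|^s B_K` (`0 ≤ s ≤ 2/3`) are square-integrable. -/
theorem statement_7 (ν : ℕ) (hν : 1 ≤ ν)
    (ω v : EuclideanSpace ℝ (Fin ν) → ℝ) (hωm : Measurable ω) (hvm : Measurable v)
    (hω0 : ∀ k, 0 ≤ ω k) (σ : ℝ) (hσ : 0 < σ)
    (mσ : ℝ) (hmσ : 0 < mσ) (hinf : ∀ k, σ ≤ ‖k‖ → mσ ≤ ω k)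
    (hint1 : IntegrableOn
      (fun k => v k ^ 2 / (ω k ^ ((1 : ℝ) / 2) * (1 + ‖k‖ ^ 2))) {k | σ < ‖k‖} volume)
    (hint2 : IntegrableOn
      (fun k => v k ^ 2 * ω k / (1 + ‖k‖ ^ 2) ^ 2) {k | σ < ‖k‖} volume)
    (M : ℝ) (hM : 0 < M) (hMb : ∀ k, ω k ≤ M * (1 + ‖k‖ ^ 2))
    (K : ℝ) (hK : σ ≤ K)
    (B : EuclideanSpace ℝ (Fin ν) → ℝ)
    (hB : B = fun k => if K ≤ ‖k‖ then v k / (ω k + ‖k‖ ^ 2) else 0) :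
    Integrable (fun k => (ω k ^ ((1 : ℝ) / 2) * B k) ^ 2) volume ∧
    Integrable (fun k => (ω k ^ (-(1 : ℝ) / 2) * ‖k‖ * B k) ^ 2) volume ∧
    ∀ s : ℝ, 0 ≤ s → s ≤ 2 / 3 → Integrable (fun k => (‖k‖ ^ s * B k) ^ 2) volume := by
  haveI : Nontrivial (EuclideanSpace ℝ (Fin ν)) := by
    have : 0 < Module.finrank ℝ (EuclideanSpace ℝ (Fin ν)) := by
      simp [finrank_euclideanSpace_fin]; omega
    exact Module.nontrivial_of_finrank_pos this
  set S : Set (EuclideanSpace ℝ (Fin ν)) := {k | σ < ‖k‖} with hSdef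
  have hSmeas : MeasurableSet S := measurableSet_lt measurable_const measurable_norm
  have hBm : Measurable B := by
    rw [hB]
    exact Measurable.ite (measurableSet_le measurable_const measurable_norm)
      (hvm.div (hωm.add (measurable_norm.pow_const 2))) measurable_const
  have hae : ∀ᵐ k : EuclideanSpace ℝ (Fin ν), ‖k‖ ≠ σ := by
    have h0 : volume (Metric.sphere (0 : EuclideanSpace ℝ (Fin ν)) σ) = 0 :=
      Measure.addHaar_sphere _ _ _
    refine ae_iff.mpr ?_
    rw [show {a : EuclideanSpace ℝ (Fin ν) | ¬ ‖a‖ ≠ σ}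
        = Metric.sphere (0 : EuclideanSpace ℝ (Fin ν)) σ by
      ext x; simp [mem_sphere_zero_iff_norm]]
    exact h0
  -- nonnegativity of the dominating integrands
  have hf1nn : ∀ x : EuclideanSpace ℝ (Fin ν),
      0 ≤ v x ^ 2 / (ω x ^ ((1:ℝ)/2) * (1 + ‖x‖ ^ 2)) := fun x =>
    div_nonneg (sq_nonneg _) (mul_nonneg (Real.rpow_nonneg (hω0 x) _) (by positivity))
  have hf2nn : ∀ x : EuclideanSpace ℝ (Fin ν),
      0 ≤ v x ^ 2 * ω x / (1 + ‖x‖ ^ 2) ^ 2 := fun x =>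
    div_nonneg (mul_nonneg (sq_nonneg _) (hω0 x)) (by positivity)
  have hCb : 0 ≤ (1 + σ⁻¹ ^ 2) / mσ ^ ((1:ℝ)/2) :=
    div_nonneg (by positivity) (Real.rpow_nonneg hmσ.le _)
  have hωpos : ∀ k : EuclideanSpace ℝ (Fin ν), K ≤ ‖k‖ → 0 < ω k := fun k hk =>
    hmσ.trans_le (hinf k (hK.trans hk))
  have hmem : ∀ k : EuclideanSpace ℝ (Fin ν), ‖k‖ ≠ σ → K ≤ ‖k‖ → k ∈ S := fun k h1 h2 =>
    lt_of_le_of_ne (hK.trans h2) (Ne.symm h1)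
  refine ⟨?_, ?_, ?_⟩
  · -- (a)
    refine Integrable.mono'
      (IntegrableOn.integrable_indicator
        (hint2.const_mul ((1 + σ⁻¹ ^ 2) ^ 2)) hSmeas)
      (((hωm.pow measurable_const).mul hBm).pow_const 2).aestronglyMeasurable ?_
    filter_upwards [hae] with k hk
    rw [Real.norm_eq_abs, abs_of_nonneg (sq_nonneg _)]
    by_cases hKk : K ≤ ‖k‖
    · have hB' : B k = v k / (ω k + ‖k‖ ^ 2) := by rw [hB]; simp [hKk]
      rw [Set.indicator_of_mem (hmem k hk hKk), hB']
      exact aux_a σ ‖k‖ (ω k) (v k) hσ (hK.trans hKk) (hωpos k hKk)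
    · have hB' : B k = 0 := by rw [hB]; simp [hKk]
      rw [hB', mul_zero, zero_pow two_ne_zero]
      exact Set.indicator_nonneg (fun x _ => mul_nonneg (by positivity) (hf2nn x)) k
  · -- (b)
    refine Integrable.mono'
      (IntegrableOn.integrable_indicator
        (hint1.const_mul ((1 + σ⁻¹ ^ 2) / mσ ^ ((1:ℝ)/2))) hSmeas)
      ((((hωm.pow measurable_const).mul measurable_norm).mul hBm).pow_const 2).aestronglyMeasurable ?_
    filter_upwards [hae] with k hk
    rw [Real.norm_eq_abs, abs_of_nonneg (sq_nonneg _)]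
    by_cases hKk : K ≤ ‖k‖
    · have hB' : B k = v k / (ω k + ‖k‖ ^ 2) := by rw [hB]; simp [hKk]
      rw [Set.indicator_of_mem (hmem k hk hKk), hB']
      exact aux_b σ ‖k‖ (ω k) (v k) mσ hσ (hK.trans hKk) hmσ (hinf k (hK.trans hKk))
    · have hB' : B k = 0 := by rw [hB]; simp [hKk]
      rw [hB', mul_zero, zero_pow two_ne_zero]
      exact Set.indicator_nonneg (fun x _ => mul_nonneg hCb (hf1nn x)) k
  · -- (c)
    intro s hs0 hs2
    refine Integrable.mono'
      (IntegrableOn.integrable_indicator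
        ((hint1.add hint2).const_mul ((1 + σ⁻¹ ^ 2) ^ 2)) hSmeas)
      (((measurable_norm.pow measurable_const).mul hBm).pow_const 2).aestronglyMeasurable ?_
    filter_upwards [hae] with k hk
    rw [Real.norm_eq_abs, abs_of_nonneg (sq_nonneg _)]
    by_cases hKk : K ≤ ‖k‖
    · have hB' : B k = v k / (ω k + ‖k‖ ^ 2) := by rw [hB]; simp [hKk]
      rw [Set.indicator_of_mem (hmem k hk hKk), hB']
      exact aux_c σ ‖k‖ (ω k) (v k) s hσ (hK.trans hKk) (hωpos k hKk) hs0 hs2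
    · have hB' : B k = 0 := by rw [hB]; simp [hKk]
      rw [hB', mul_zero, zero_pow two_ne_zero]
      exact Set.indicator_nonneg (fun x _ =>
        mul_nonneg (by positivity) (add_nonneg (hf1nn x) (hf2nn x))) k
end

section
/- Let μ ≥ 0 and g ∈ ℝ with g ≠ 0, and define on ℝ³ the dispersion ω(k) = (μ² + ‖k‖²)^{1/2} and coupling function v(k) = g·ω(k)^{-1/2}. Then for every η ∈ ℝ³ with η ≠ 0 and every K > 0, the function k ↦ ⟨η, k⟩·v(k)/(ω(k)+‖k‖²) is not square-integrable on {k ∈ ℝ³ : ‖k‖ ≥ K}; equivalently, ∫_{‖k‖ ≥ K} ⟨η, k⟩²·g² / ((μ²+‖k‖²)^{1/2}·((μ²+‖k‖²)^{1/2}+‖k‖²)²) dk = ∞. -/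
open MeasureTheory
open scoped ENNReal InnerProductSpace

/-- The integral of `c/t` over `[M, ∞)` diverges. -/
lemma aux_inv_lintegral_top (M c : ℝ) (hM : 0 < M) (hc : 0 < c) :
    ∫⁻ t in Set.Ici M, ENNReal.ofReal (c / t) = ⊤ := by
  by_contra h
  have hmeas : Measurable fun t : ℝ => c / t := measurable_const.div measurable_id
  have hint : IntegrableOn (fun t : ℝ => c / t) (Set.Ici M) := by
    refine ⟨hmeas.aestronglyMeasurable, ?_⟩
    rw [hasFiniteIntegral_iff_ofReal ?_]
    · exact lt_top_iff_ne_top.2 h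
    · filter_upwards [ae_restrict_mem measurableSet_Ici] with t ht
      exact div_nonneg hc.le (hM.le.trans ht)
  have hint2 : IntegrableOn (fun t : ℝ => t⁻¹) (Set.Ioi M) := by
    have h2 : IntegrableOn (fun t : ℝ => c⁻¹ * (c / t)) (Set.Ioi M) :=
      (hint.mono_set Set.Ioi_subset_Ici_self).const_mul c⁻¹
    refine IntegrableOn.congr_fun h2 (fun t ht => ?_) measurableSet_Ioi
    rw [← mul_div_assoc, inv_mul_cancel₀ hc.ne', one_div]
  have hint3 : IntegrableOn (fun t : ℝ => t ^ (-1 : ℝ)) (Set.Ioi M) :=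
    hint2.congr_fun (fun t _ => (Real.rpow_neg_one t).symm) measurableSet_Ioi
  have := (integrableOn_Ioi_rpow_iff hM).mp hint3
  linarith

/-- The key divergence computation in coordinates: the integral of the indicator
of `S2 = {p | M ≤ p.1 ∧ ∀ j, |p.2 j| ≤ p.1}` times `c / p.1 ^ 3` diverges. -/
lemma aux_prod_lintegral_top (M c : ℝ) (hM : 1 ≤ M) (hc : 0 < c) :
    ∫⁻ p in {p : ℝ × (Fin 2 → ℝ) | M ≤ p.1 ∧ ∀ j, |p.2 j| ≤ p.1},
      ENNReal.ofReal (c / p.1 ^ 3) = ⊤ := by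
  set S2 : Set (ℝ × (Fin 2 → ℝ)) := {p | M ≤ p.1 ∧ ∀ j, |p.2 j| ≤ p.1} with hS2
  have hS2meas : MeasurableSet S2 := by
    have : S2 = {p : ℝ × (Fin 2 → ℝ) | M ≤ p.1} ∩ ⋂ j, {p | |p.2 j| ≤ p.1} := by
      ext p; simp [hS2]
    rw [this]
    exact (measurableSet_le measurable_const measurable_fst).inter
      (MeasurableSet.iInter fun j =>
        measurableSet_le (measurable_snd.eval.abs) measurable_fst)
  set L2 : ℝ × (Fin 2 → ℝ) → ℝ≥0∞ := fun p => ENNReal.ofReal (c / p.1 ^ 3) with hL2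
  have hL2meas : Measurable L2 :=
    (measurable_const.div (measurable_fst.pow_const 3)).ennreal_ofReal
  have h1 : ∫⁻ p in S2, L2 p = ∫⁻ t, ∫⁻ w, S2.indicator L2 (t, w) := by
    rw [← lintegral_indicator hS2meas, Measure.volume_eq_prod,
      lintegral_prod _ (hL2meas.indicator hS2meas).aemeasurable]
  have hInner : ∀ t : ℝ, M ≤ t → (∫⁻ w, S2.indicator L2 (t, w)) =
      ENNReal.ofReal (4 * c / t) := by
    intro t ht
    have ht0 : (0:ℝ) < t := lt_of_lt_of_le one_pos (hM.trans ht)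
    have hbox : (fun w : Fin 2 → ℝ => S2.indicator L2 (t, w)) =
        (Set.pi Set.univ fun _ : Fin 2 => Set.Icc (-t) t).indicator
          (fun _ => ENNReal.ofReal (c / t ^ 3)) := by
      funext w
      by_cases hw : ∀ j : Fin 2, |w j| ≤ t
      · have hw' : w ∈ Set.pi Set.univ fun _ : Fin 2 => Set.Icc (-t) t := by
          intro j _; exact abs_le.mp (hw j)
        have hw'' : (t, w) ∈ S2 := ⟨ht, hw⟩
        rw [Set.indicator_of_mem hw'', Set.indicator_of_mem hw']
      · have hw' : w ∉ Set.pi Set.univ fun _ : Fin 2 => Set.Icc (-t) t := by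
          intro hmem
          exact hw fun j => abs_le.mpr (hmem j (Set.mem_univ j))
        have hw'' : (t, w) ∉ S2 := fun hmem => hw hmem.2
        rw [Set.indicator_of_notMem hw'', Set.indicator_of_notMem hw']
    rw [hbox, lintegral_indicator (MeasurableSet.univ_pi fun _ => measurableSet_Icc),
      setLIntegral_const, volume_pi_pi, Real.volume_Icc]
    have h2t : t - -t = 2 * t := by ring
    rw [h2t, Finset.prod_const, Finset.card_univ, Fintype.card_fin,
      ← ENNReal.ofReal_pow (by positivity), ← ENNReal.ofReal_mul (by positivity)]
    congr 1
    field_simp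
    ring
  have h3 : ∫⁻ t, (∫⁻ w, S2.indicator L2 (t, w)) = ⊤ := by
    rw [eq_top_iff]
    calc (⊤ : ℝ≥0∞) = ∫⁻ t in Set.Ici M, ENNReal.ofReal (4 * c / t) :=
          (aux_inv_lintegral_top M (4 * c) (lt_of_lt_of_le one_pos hM) (by positivity)).symm
      _ = ∫⁻ t in Set.Ici M, (∫⁻ w, S2.indicator L2 (t, w)) :=
          setLIntegral_congr_fun measurableSet_Ici
            (fun t ht => (hInner t ht).symm)
      _ ≤ ∫⁻ t, (∫⁻ w, S2.indicator L2 (t, w)) := setLIntegral_le_lintegral _ _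
  rw [← hS2, ← hL2] at *
  rw [h1, h3]

set_option maxHeartbeats 1000000 in
/-- In the physical Nelson model on `ℝ³` (`ω(k) = √(μ²+‖k‖²)`, `v = g·ω^{-1/2}`, `g ≠ 0`),
for every `η ≠ 0` and `K > 0` the function `k ↦ ⟨η,k⟩·v(k)/(ω(k)+‖k‖²)` is not
square-integrable on `{‖k‖ ≥ K}`:
`∫_{‖k‖≥K} ⟨η,k⟩²g²/(√(μ²+‖k‖²)·(√(μ²+‖k‖²)+‖k‖²)²) dk = ∞`. -/
theorem statement_8 (μ g : ℝ) (hμ : 0 ≤ μ) (hg : g ≠ 0)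
    (η : EuclideanSpace ℝ (Fin 3)) (hη : η ≠ 0) (K : ℝ) (hK : 0 < K) :
    ∫⁻ k in {k : EuclideanSpace ℝ (Fin 3) | K ≤ ‖k‖},
      ENNReal.ofReal (⟪η, k⟫_ℝ ^ 2 * g ^ 2 /
        (Real.sqrt (μ ^ 2 + ‖k‖ ^ 2) *
          (Real.sqrt (μ ^ 2 + ‖k‖ ^ 2) + ‖k‖ ^ 2) ^ 2)) = ⊤ := by
  classical
  have hη' : ‖η‖ ≠ 0 := norm_ne_zero_iff.2 hη
  -- an orthonormal basis whose first vector is `η/‖η‖`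
  set e : EuclideanSpace ℝ (Fin 3) := ‖η‖⁻¹ • η with he
  have hnorme : ‖e‖ = 1 := by
    rw [he, norm_smul, norm_inv, norm_norm, inv_mul_cancel₀ hη']
  obtain ⟨b, hb⟩ : ∃ b : OrthonormalBasis (Fin 3) ℝ (EuclideanSpace ℝ (Fin 3)),
      ∀ i ∈ ({0} : Set (Fin 3)), b i = (fun _ => e) i := by
    apply Orthonormal.exists_orthonormalBasis_extension_of_card_eq
    · simp [finrank_euclideanSpace]
    · haveI : Unique (↥({0} : Set (Fin 3))) := Set.uniqueSingleton 0
      constructor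
      · intro i
        simpa using hnorme
      · intro i j hij
        exact absurd (Subsingleton.elim i j) hij
  have hb0 : b 0 = e := hb 0 rfl
  -- the measure-preserving coordinate map
  set Φ : EuclideanSpace ℝ (Fin 3) → (Fin 3 → ℝ) :=
    fun k => (MeasurableEquiv.toLp 2 (Fin 3 → ℝ)).symm (b.repr k) with hΦ
  have hT : MeasurePreserving Φ volume volume :=
    (EuclideanSpace.volume_preserving_symm_measurableEquiv_toLp (Fin 3)).comp b.measurePreserving_repr
  have hemb : MeasurableEmbedding Φ :=
    (MeasurableEquiv.toLp 2 (Fin 3 → ℝ)).symm.measurableEmbedding.comp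
      b.repr.toHomeomorph.toMeasurableEquiv.measurableEmbedding
  have hΦapp : ∀ (k : EuclideanSpace ℝ (Fin 3)) (i : Fin 3), Φ k i = ⟪b i, k⟫_ℝ := by
    intro k i
    rw [hΦ]
    simp only [MeasurableEquiv.coe_toLp_symm]
    exact b.repr_apply_apply k i
  have hΦnorm : ∀ k : EuclideanSpace ℝ (Fin 3),
      Φ k 0 ^ 2 + Φ k 1 ^ 2 + Φ k 2 ^ 2 = ‖k‖ ^ 2 := by
    intro k
    have h1 : ‖k‖ = ‖b.repr k‖ := (b.repr.norm_map k).symm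
    have h2 : ‖b.repr k‖ = Real.sqrt (∑ i : Fin 3, ‖b.repr k i‖ ^ 2) :=
      EuclideanSpace.norm_eq _
    have h3 : ∀ i : Fin 3, b.repr k i = Φ k i := by
      intro i
      rw [hΦ]
      simp only [MeasurableEquiv.coe_toLp_symm]
    rw [h1, h2]
    rw [Real.sq_sqrt (by positivity)]
    simp only [h3, Fin.sum_univ_three, Real.norm_eq_abs, sq_abs]
  have hΦ0 : ∀ k : EuclideanSpace ℝ (Fin 3), ⟪η, k⟫_ℝ = ‖η‖ * Φ k 0 := by
    intro k
    rw [hΦapp k 0, hb0, he, real_inner_smul_left]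
    field_simp
  -- transfer the integral to coordinates
  set N : (Fin 3 → ℝ) → ℝ := fun y => y 0 ^ 2 + y 1 ^ 2 + y 2 ^ 2 with hN
  set F3 : (Fin 3 → ℝ) → ℝ≥0∞ := fun y => ENNReal.ofReal ((‖η‖ * y 0) ^ 2 * g ^ 2 /
      (Real.sqrt (μ ^ 2 + N y) * (Real.sqrt (μ ^ 2 + N y) + N y) ^ 2)) with hF3
  set S'' : Set (Fin 3 → ℝ) := {y | K ≤ Real.sqrt (N y)} with hS''
  have hset : {k : EuclideanSpace ℝ (Fin 3) | K ≤ ‖k‖} = Φ ⁻¹' S'' := by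
    ext k
    simp only [Set.mem_setOf_eq, Set.mem_preimage, hS'', hN]
    rw [hΦnorm k, Real.sqrt_sq (norm_nonneg k)]
  have hfun : ∀ k : EuclideanSpace ℝ (Fin 3),
      ENNReal.ofReal (⟪η, k⟫_ℝ ^ 2 * g ^ 2 /
        (Real.sqrt (μ ^ 2 + ‖k‖ ^ 2) *
          (Real.sqrt (μ ^ 2 + ‖k‖ ^ 2) + ‖k‖ ^ 2) ^ 2)) = F3 (Φ k) := by
    intro k
    rw [hF3]
    simp only [hN]
    rw [hΦnorm k, hΦ0 k]
  calc ∫⁻ k in {k : EuclideanSpace ℝ (Fin 3) | K ≤ ‖k‖},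
        ENNReal.ofReal (⟪η, k⟫_ℝ ^ 2 * g ^ 2 /
          (Real.sqrt (μ ^ 2 + ‖k‖ ^ 2) *
            (Real.sqrt (μ ^ 2 + ‖k‖ ^ 2) + ‖k‖ ^ 2) ^ 2))
      = ∫⁻ k in Φ ⁻¹' S'', F3 (Φ k) := by
        rw [← hset]
        exact lintegral_congr fun k => hfun k
    _ = ∫⁻ y in S'', F3 y := hT.setLIntegral_comp_preimage_emb hemb F3 S''
    _ = ⊤ := by
        -- lower bound on a square cone
        rw [eq_top_iff]
        set M : ℝ := max K 1 with hM
        have hM1 : 1 ≤ M := le_max_right _ _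
        have hMK : K ≤ M := le_max_left _ _
        set a : ℝ := μ + 2 with ha
        have ha0 : 0 < a := by positivity
        set c : ℝ := ‖η‖ ^ 2 * g ^ 2 / (a * (a + 3) ^ 2) with hc
        have hc0 : 0 < c := by
          apply div_pos
          · have : 0 < ‖η‖ := lt_of_le_of_ne (norm_nonneg η) (Ne.symm hη')
            positivity
          · positivity
        set S : Set (Fin 3 → ℝ) := {y | M ≤ y 0 ∧ |y 1| ≤ y 0 ∧ |y 2| ≤ y 0} with hS
        have hSmeas : MeasurableSet S := by
          have : S = {y : Fin 3 → ℝ | M ≤ y 0} ∩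
              ({y | |y 1| ≤ y 0} ∩ {y | |y 2| ≤ y 0}) := by ext y; simp [hS, and_assoc]
          rw [this]
          exact (measurableSet_le measurable_const (measurable_pi_apply 0)).inter
            ((measurableSet_le (measurable_pi_apply 1).abs (measurable_pi_apply 0)).inter
              (measurableSet_le (measurable_pi_apply 2).abs (measurable_pi_apply 0)))
        have hsub : S ⊆ S'' := by
          intro y hy
          obtain ⟨h0, _, _⟩ := hy
          have ht0 : (0:ℝ) ≤ y 0 := le_trans (by linarith) h0
          have h1 : y 0 = Real.sqrt (y 0 ^ 2) := (Real.sqrt_sq ht0).symm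
          have h2 : Real.sqrt (y 0 ^ 2) ≤ Real.sqrt (N y) := by
            apply Real.sqrt_le_sqrt
            simp only [hN]
            nlinarith [sq_nonneg (y 1), sq_nonneg (y 2)]
          simp only [hS'', Set.mem_setOf_eq]
          calc K ≤ M := hMK
            _ ≤ y 0 := h0
            _ = Real.sqrt (y 0 ^ 2) := h1
            _ ≤ Real.sqrt (N y) := h2
        have hpoint : ∀ y ∈ S, ENNReal.ofReal (c / (y 0) ^ 3) ≤ F3 y := by
          intro y hy
          obtain ⟨h0, h1, h2⟩ := hy
          set t : ℝ := y 0 with hty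
          have ht1 : 1 ≤ t := hM1.trans h0
          have ht0 : (0:ℝ) < t := lt_of_lt_of_le one_pos ht1
          have hy1 : y 1 ^ 2 ≤ t ^ 2 := by
            have := abs_nonneg (y 1)
            nlinarith [sq_abs (y 1)]
          have hy2 : y 2 ^ 2 ≤ t ^ 2 := by
            have := abs_nonneg (y 2)
            nlinarith [sq_abs (y 2)]
          have hNlb : t ^ 2 ≤ N y := by
            simp only [hN]
            nlinarith [sq_nonneg (y 1), sq_nonneg (y 2)]
          have hNub : N y ≤ 3 * t ^ 2 := by
            simp only [hN]; nlinarith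
          have hs_lb : t ≤ Real.sqrt (μ ^ 2 + N y) := by
            rw [show t = Real.sqrt (t ^ 2) from (Real.sqrt_sq ht0.le).symm]
            exact Real.sqrt_le_sqrt (by nlinarith [sq_nonneg μ])
          have hs_ub : Real.sqrt (μ ^ 2 + N y) ≤ a * t := by
            have h3 : μ ^ 2 + N y ≤ (a * t) ^ 2 := by
              simp only [ha]
              have ht2 : 1 ≤ t ^ 2 := one_le_pow₀ ht1
              nlinarith [mul_nonneg (sq_nonneg μ) (sub_nonneg.2 ht2),
                mul_nonneg hμ (sq_nonneg t)]
            calc Real.sqrt (μ ^ 2 + N y) ≤ Real.sqrt ((a * t) ^ 2) :=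
                  Real.sqrt_le_sqrt h3
              _ = a * t := Real.sqrt_sq (by positivity)
          have hs_pos : 0 < Real.sqrt (μ ^ 2 + N y) := lt_of_lt_of_le ht0 hs_lb
          set s : ℝ := Real.sqrt (μ ^ 2 + N y) with hsdef
          have hden_pos : 0 < s * (s + N y) ^ 2 := by
            have : 0 < s + N y := by nlinarith
            positivity
          have hden_ub : s * (s + N y) ^ 2 ≤ a * (a + 3) ^ 2 * t ^ 5 := by
            have hsn : s + N y ≤ (a + 3) * t ^ 2 := by
              have hat : a * t ≤ a * t ^ 2 := by nlinarith
              nlinarith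
            have hsn0 : 0 ≤ s + N y := by positivity
            have hmul : (s + N y) ^ 2 ≤ ((a + 3) * t ^ 2) ^ 2 := by nlinarith
            calc s * (s + N y) ^ 2 ≤ (a * t) * ((a + 3) * t ^ 2) ^ 2 := by
                  apply mul_le_mul hs_ub hmul (by positivity) (by positivity)
              _ = a * (a + 3) ^ 2 * t ^ 5 := by ring
          apply ENNReal.ofReal_le_ofReal
          have heq : c / t ^ 3 = (‖η‖ * t) ^ 2 * g ^ 2 / (a * (a + 3) ^ 2 * t ^ 5) := by
            rw [hc]
            field_simp
          rw [heq]
          exact div_le_div_of_nonneg_left (by positivity) hden_pos hden_ub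
        calc (⊤:ℝ≥0∞) = ∫⁻ y in S, ENNReal.ofReal (c / (y 0) ^ 3) := by
              -- transfer to the product space and use the auxiliary lemma
              have he3 := (volume_preserving_piFinSuccAbove (fun _ : Fin 3 => ℝ)
                0).setLIntegral_comp_preimage_emb
                (MeasurableEquiv.piFinSuccAbove (fun _ : Fin 3 => ℝ) 0).measurableEmbedding
                (fun p : ℝ × (Fin 2 → ℝ) => ENNReal.ofReal (c / p.1 ^ 3))
                {p : ℝ × (Fin 2 → ℝ) | M ≤ p.1 ∧ ∀ j, |p.2 j| ≤ p.1}
              have hseteq : (MeasurableEquiv.piFinSuccAbove (fun _ : Fin 3 => ℝ) 0) ⁻¹'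
                  {p : ℝ × (Fin 2 → ℝ) | M ≤ p.1 ∧ ∀ j, |p.2 j| ≤ p.1} = S := by
                ext y
                simp only [Set.mem_preimage, Set.mem_setOf_eq,
                  MeasurableEquiv.piFinSuccAbove_apply, hS]
                constructor
                · rintro ⟨hy0, hyj⟩
                  refine ⟨hy0, ?_, ?_⟩
                  · simpa [Fin.removeNth, Fin.succAbove, Fin.tail] using hyj 0
                  · simpa [Fin.removeNth, Fin.succAbove, Fin.tail] using hyj 1
                · rintro ⟨hy0, hy1, hy2⟩
                  refine ⟨hy0, ?_⟩
                  intro j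
                  fin_cases j
                  · simpa [Fin.removeNth, Fin.succAbove, Fin.tail] using hy1
                  · simpa [Fin.removeNth, Fin.succAbove, Fin.tail] using hy2
              have happ : ∀ y : Fin 3 → ℝ,
                  ((MeasurableEquiv.piFinSuccAbove (fun _ : Fin 3 => ℝ) 0) y).1 = y 0 := by
                intro y
                simp [MeasurableEquiv.piFinSuccAbove_apply]
              rw [hseteq] at he3
              simp only [happ] at he3
              rw [he3]
              exact (aux_prod_lintegral_top M c hM1 hc0).symm
          _ ≤ ∫⁻ y in S, F3 y := setLIntegral_mono' hSmeas hpoint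
          _ ≤ ∫⁻ y in S'', F3 y := lintegral_mono_set hsub
end

section
/- Let ν ≥ 1 and let S ⊆ ℝ^ν be open, nonempty, and a cone (t·k ∈ S whenever t > 0 and k ∈ S). Let ρ : [0,∞) → [0,∞] be measurable, set f(k) = ρ(‖k‖), and let R > 0. If ∫_{B_R(0)} f(k) dk = ∞, then ∫_{S ∩ B_R(0)} f(k) dk = ∞. -/
open MeasureTheory
open scoped ENNReal

/-- If `S ⊆ ℝ^ν` is an open nonempty cone and `f(k) = ρ(‖k‖)` is a radial `[0,∞]`-valued
function whose integral over the ball `B_R(0)` is infinite, then its integral over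
`S ∩ B_R(0)` is infinite as well. -/
theorem statement_12 (ν : ℕ) (hν : 1 ≤ ν) (S : Set (EuclideanSpace ℝ (Fin ν)))
    (hopen : IsOpen S) (hne : S.Nonempty)
    (hcone : ∀ t : ℝ, 0 < t → ∀ k ∈ S, t • k ∈ S)
    (ρ : ℝ → ℝ≥0∞) (hρ : Measurable ρ) (R : ℝ) (hR : 0 < R)
    (hdiv : ∫⁻ k in Metric.ball (0 : EuclideanSpace ℝ (Fin ν)) R, ρ ‖k‖ = ⊤) :
    ∫⁻ k in S ∩ Metric.ball (0 : EuclideanSpace ℝ (Fin ν)) R, ρ ‖k‖ = ⊤ := by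
  classical
  haveI : Nontrivial (EuclideanSpace ℝ (Fin ν)) := by
    apply Module.nontrivial_of_finrank_pos (R := ℝ)
    rw [finrank_euclideanSpace_fin]
    exact_mod_cast hν
  -- find a unit vector in S
  obtain ⟨k₀, hk₀⟩ := hne
  obtain ⟨ε, hε, hball⟩ := Metric.isOpen_iff.1 hopen k₀ hk₀
  -- a nonzero element of S
  obtain ⟨k₁, hk₁S, hk₁ne⟩ : ∃ k₁ ∈ S, k₁ ≠ 0 := by
    by_cases h0 : k₀ = 0
    · obtain ⟨y, hy⟩ := exists_ne (0 : EuclideanSpace ℝ (Fin ν))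
      have hy' : 0 < ‖y‖ := norm_pos_iff.2 hy
      have hnorm : ‖(ε / (2 * ‖y‖)) • y‖ = ε / 2 := by
        rw [norm_smul, Real.norm_eq_abs, abs_of_pos (by positivity)]
        field_simp
      refine ⟨(ε / (2 * ‖y‖)) • y, hball ?_, ?_⟩
      · simp only [Metric.mem_ball, dist_eq_norm, h0, sub_zero, hnorm]
        linarith
      · exact smul_ne_zero (by positivity) hy
    · exact ⟨k₀, hk₀, h0⟩
  set u : EuclideanSpace ℝ (Fin ν) := ‖k₁‖⁻¹ • k₁ with hu_def
  have hk₁pos : 0 < ‖k₁‖ := norm_pos_iff.2 hk₁ne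
  have huS : u ∈ S := hcone _ (by positivity) _ hk₁S
  have hunorm : ‖u‖ = 1 := by
    rw [hu_def, norm_smul, Real.norm_eq_abs, abs_of_pos (by positivity),
      inv_mul_cancel₀ (ne_of_gt hk₁pos)]
  -- for each x, the reflection sending x to u (when ‖x‖ = ‖u‖)
  set T : EuclideanSpace ℝ (Fin ν) → (EuclideanSpace ℝ (Fin ν) ≃ₗᵢ[ℝ] EuclideanSpace ℝ (Fin ν)) := fun x => Submodule.reflection (ℝ ∙ (x - u))ᗮ with hT_def
  have hTx : ∀ x : EuclideanSpace ℝ (Fin ν), ‖x‖ = 1 → T x x = u := fun x hx =>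
    Submodule.reflection_sub (by rw [hx, hunorm])
  -- open cover of the sphere
  have hcover : Metric.sphere (0 : EuclideanSpace ℝ (Fin ν)) 1 ⊆ ⋃ x : EuclideanSpace ℝ (Fin ν), (T x) ⁻¹' S := by
    intro x hx
    rw [mem_sphere_zero_iff_norm] at hx
    exact Set.mem_iUnion.2 ⟨x, by simp [hTx x hx, huS]⟩
  obtain ⟨t, ht⟩ := (isCompact_sphere (0 : EuclideanSpace ℝ (Fin ν)) 1).elim_finite_subcover
    (fun x : EuclideanSpace ℝ (Fin ν) => (T x) ⁻¹' S) (fun x => hopen.preimage (T x).continuous) hcover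
  -- the ball minus 0 is covered by preimages of S
  have hcov2 : Metric.ball (0 : EuclideanSpace ℝ (Fin ν)) R \ {0} ⊆
      ⋃ x ∈ t, ((T x) ⁻¹' S ∩ Metric.ball (0 : EuclideanSpace ℝ (Fin ν)) R) := by
    rintro k ⟨hkball, hk0⟩
    have hk0' : k ≠ 0 := hk0
    have hknorm : 0 < ‖k‖ := norm_pos_iff.2 hk0'
    have : (‖k‖⁻¹ • k) ∈ Metric.sphere (0 : EuclideanSpace ℝ (Fin ν)) 1 := by
      rw [mem_sphere_zero_iff_norm, norm_smul, Real.norm_eq_abs,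
        abs_of_pos (by positivity), inv_mul_cancel₀ (ne_of_gt hknorm)]
    obtain ⟨x, hxt, hxS⟩ := Set.mem_iUnion₂.1 (ht this)
    refine Set.mem_iUnion₂.2 ⟨x, hxt, ?_, hkball⟩
    have hlin : T x (‖k‖⁻¹ • k) = ‖k‖⁻¹ • T x k := (T x).map_smul _ _
    have hxS' : ‖k‖⁻¹ • T x k ∈ S := by rw [← hlin]; exact hxS
    have := hcone ‖k‖ hknorm _ hxS'
    rwa [smul_smul, mul_inv_cancel₀ (ne_of_gt hknorm), one_smul] at this
  -- the key identity: integral over each preimage equals integral over S ∩ ball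
  have hkey : ∀ x : EuclideanSpace ℝ (Fin ν), ∫⁻ k in (T x) ⁻¹' S ∩ Metric.ball (0 : EuclideanSpace ℝ (Fin ν)) R, ρ ‖k‖ =
      ∫⁻ k in S ∩ Metric.ball (0 : EuclideanSpace ℝ (Fin ν)) R, ρ ‖k‖ := by
    intro x
    have hpre : (T x) ⁻¹' (S ∩ Metric.ball (0 : EuclideanSpace ℝ (Fin ν)) R) =
        (T x) ⁻¹' S ∩ Metric.ball (0 : EuclideanSpace ℝ (Fin ν)) R := by
      ext k
      simp [Metric.mem_ball, dist_eq_norm, (T x).norm_map]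
    have hmp : MeasurePreserving (T x) (volume : Measure (EuclideanSpace ℝ (Fin ν))) volume :=
      (T x).measurePreserving
    have hemb : MeasurableEmbedding (T x) :=
      (T x).toHomeomorph.measurableEmbedding
    calc ∫⁻ k in (T x) ⁻¹' S ∩ Metric.ball (0 : EuclideanSpace ℝ (Fin ν)) R, ρ ‖k‖
        = ∫⁻ k in (T x) ⁻¹' (S ∩ Metric.ball (0 : EuclideanSpace ℝ (Fin ν)) R), ρ ‖T x k‖ := by
          rw [hpre]; exact lintegral_congr fun k => by rw [(T x).norm_map]
      _ = ∫⁻ k in S ∩ Metric.ball (0 : EuclideanSpace ℝ (Fin ν)) R, ρ ‖k‖ :=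
          hmp.setLIntegral_comp_preimage_emb hemb (fun k => ρ ‖k‖)
            (S ∩ Metric.ball (0 : EuclideanSpace ℝ (Fin ν)) R)
  -- now conclude
  by_contra hfin
  set B := Metric.ball (0 : EuclideanSpace ℝ (Fin ν)) R with hB_def
  set V : EuclideanSpace ℝ (Fin ν) → Set (EuclideanSpace ℝ (Fin ν)) :=
    fun x => (T x) ⁻¹' S ∩ B with hV_def
  have h0 : (volume : Measure (EuclideanSpace ℝ (Fin ν))) {(0 : EuclideanSpace ℝ (Fin ν))} = 0 :=
    measure_singleton 0
  have hstep1 : ∫⁻ k in B, ρ ‖k‖ = ∫⁻ k in B \ {0}, ρ ‖k‖ := by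
    refine setLIntegral_congr ?_
    exact (diff_ae_eq_self.2 (le_antisymm
      (le_trans (measure_mono Set.inter_subset_right) h0.le) zero_le)).symm
  have hUnion : (⋃ x ∈ t, V x) = ⋃ x : {x // x ∈ t}, V (x : EuclideanSpace ℝ (Fin ν)) := by
    ext k; simp
  have hstep2 : ∫⁻ k in B \ {0}, ρ ‖k‖ ≤ ∑ x ∈ t, ∫⁻ k in V x, ρ ‖k‖ := by
    calc ∫⁻ k in B \ {0}, ρ ‖k‖
        ≤ ∫⁻ k in ⋃ x ∈ t, V x, ρ ‖k‖ := lintegral_mono_set hcov2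
      _ = ∫⁻ k in ⋃ x : {x // x ∈ t}, V (x : EuclideanSpace ℝ (Fin ν)), ρ ‖k‖ := by
          rw [hUnion]
      _ ≤ ∑' x : {x // x ∈ t}, ∫⁻ k in V (x : EuclideanSpace ℝ (Fin ν)), ρ ‖k‖ :=
          lintegral_iUnion_le _ _
      _ = ∑ x ∈ t, ∫⁻ k in V x, ρ ‖k‖ :=
          t.tsum_subtype (fun x => ∫⁻ k in V x, ρ ‖k‖)
  rw [hstep1] at hdiv
  have hle : (⊤ : ℝ≥0∞) ≤ ∑ x ∈ t, ∫⁻ k in S ∩ B, ρ ‖k‖ := by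
    rw [← hdiv]
    calc ∫⁻ k in B \ {0}, ρ ‖k‖
        ≤ ∑ x ∈ t, ∫⁻ k in V x, ρ ‖k‖ := hstep2
      _ = ∑ x ∈ t, ∫⁻ k in S ∩ B, ρ ‖k‖ :=
          Finset.sum_congr rfl fun x _ => hkey x
  rw [Finset.sum_const, nsmul_eq_mul] at hle
  exact absurd (top_le_iff.1 hle) (ENNReal.mul_ne_top (by simp) hfin)
end

section
/- Let H be a complex Hilbert space and let J be a bounded selfadjoint injective linear operator on H. Let (W_n) be a sequence of unitary operators on H converging in the strong operator topology to a unitary operator W. Suppose that for every n there exist bounded operators C_n and D_n on H with J∘C_n = W_n∘J and J∘D_n = W_n*∘J, and suppose that the sequences (C_n* C_n) and (D_n* D_n) both converge in the strong operator topology. Then there exists a (unique) bounded operator C on H with J∘C = W∘J, and C_n → C as well as C_n* → C* in the strong operator topology. -/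
open Filter ContinuousLinearMap

set_option linter.unusedSectionVars false
set_option maxHeartbeats 1000000

section AuxLemmas

variable {H : Type*} [NormedAddCommGroup H] [InnerProductSpace ℂ H] [CompleteSpace H]


/-- A pointwise-convergent, uniformly bounded sequence of operators has a CLM strong limit. -/
lemma aux_strong_limit_s16 (A : ℕ → H →L[ℂ] H) (M : ℝ)
    (hM : ∀ n (x : H), ‖A n x‖ ≤ M * ‖x‖)
    (h : ∀ x : H, ∃ y : H, Tendsto (fun n => A n x) atTop (nhds y)) :
    ∃ B : H →L[ℂ] H, ∀ x, Tendsto (fun n => A n x) atTop (nhds (B x)) := by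
  choose f hf using h
  have hadd : ∀ x y, f (x + y) = f x + f y := by
    intro x y
    have h1 : Tendsto (fun n => A n (x + y)) atTop (nhds (f x + f y)) := by
      simpa [map_add] using (hf x).add (hf y)
    exact tendsto_nhds_unique (hf (x + y)) h1
  have hsmul : ∀ (c : ℂ) x, f (c • x) = c • f x := by
    intro c x
    have h1 : Tendsto (fun n => A n (c • x)) atTop (nhds (c • f x)) := by
      simpa [map_smul] using (hf x).const_smul c
    exact tendsto_nhds_unique (hf (c • x)) h1
  have hbound : ∀ x, ‖f x‖ ≤ M * ‖x‖ := by
    intro x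
    exact le_of_tendsto (hf x).norm (Eventually.of_forall fun n => hM n x)
  refine ⟨LinearMap.mkContinuous ⟨⟨f, hadd⟩, hsmul⟩ M hbound, fun x => hf x⟩

/-- Pointwise convergence on a dense set plus uniform bounds gives pointwise convergence. -/
lemma aux_dense_limit (A : ℕ → H →L[ℂ] H) (M : ℝ)
    (hM : ∀ n (x : H), ‖A n x‖ ≤ M * ‖x‖)
    {s : Set H} (hs : Dense s)
    (h : ∀ z ∈ s, ∃ y : H, Tendsto (fun n => A n z) atTop (nhds y)) :
    ∀ x : H, ∃ y : H, Tendsto (fun n => A n x) atTop (nhds y) := by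
  intro x
  set M' : ℝ := |M| + 1 with hM'
  have hM'pos : 0 < M' := by positivity
  have hMle : ∀ n (v : H), ‖A n v‖ ≤ M' * ‖v‖ := fun n v =>
    (hM n v).trans (by
      have : M ≤ M' := (le_abs_self M).trans (by simp [hM'])
      exact mul_le_mul_of_nonneg_right this (norm_nonneg v))
  have hcauchy : CauchySeq (fun n => A n x) := by
    rw [Metric.cauchySeq_iff]
    intro ε hε
    obtain ⟨z, hz, hzx⟩ : ∃ z ∈ s, dist x z < ε / (3 * M') := by
      have := Metric.dense_iff.mp hs x (ε / (3 * M')) (by positivity)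
      obtain ⟨z, hz1, hz2⟩ := this
      exact ⟨z, hz2, by rw [dist_comm]; exact Metric.mem_ball.mp hz1⟩
    obtain ⟨y, hy⟩ := h z hz
    have hzc : CauchySeq (fun n => A n z) := hy.cauchySeq
    rw [Metric.cauchySeq_iff] at hzc
    obtain ⟨N, hN⟩ := hzc (ε / 3) (by positivity)
    refine ⟨N, fun m hm n hn => ?_⟩
    have h1 : ∀ k, dist (A k x) (A k z) ≤ M' * dist x z := by
      intro k
      rw [dist_eq_norm, dist_eq_norm, ← map_sub]
      exact hMle k (x - z)
    have hd : M' * dist x z < ε / 3 := by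
      have := (mul_lt_mul_of_pos_left hzx hM'pos)
      calc M' * dist x z < M' * (ε / (3 * M')) := this
        _ = ε / 3 := by field_simp
    calc dist (A m x) (A n x)
        ≤ dist (A m x) (A m z) + dist (A m z) (A n z) + dist (A n z) (A n x) :=
          dist_triangle4 _ _ _ _
      _ ≤ M' * dist x z + dist (A m z) (A n z) + M' * dist x z := by
          gcongr
          · exact h1 m
          · rw [dist_comm]; exact h1 n
      _ < ε / 3 + ε / 3 + ε / 3 := by
          have h2 := hN m hm n hn
          gcongr
      _ = ε := by ring
  exact cauchySeq_tendsto_of_complete hcauchy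

end AuxLemmas

/-- Let `J` be a bounded selfadjoint injective operator on a complex Hilbert space `H`,
`(W_n)` unitaries converging strongly to a unitary `W`, and suppose there are bounded
operators `C_n, D_n` with `J C_n = W_n J`, `J D_n = W_n* J` such that `(C_n* C_n)` and
`(D_n* D_n)` converge strongly. Then there is a unique bounded `C` with `J C = W J`, and
`C_n → C`, `C_n* → C*` strongly. -/
theorem statement_16 {H : Type*} [NormedAddCommGroup H] [InnerProductSpace ℂ H]
    [CompleteSpace H] (J : H →L[ℂ] H) (hJsa : IsSelfAdjoint J)
    (hJinj : Function.Injective J)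
    (W : ℕ → H →L[ℂ] H) (hWu : ∀ n, W n ∈ unitary (H →L[ℂ] H))
    (Wlim : H →L[ℂ] H) (hWlimu : Wlim ∈ unitary (H →L[ℂ] H))
    (hWconv : ∀ x : H, Tendsto (fun n => W n x) atTop (nhds (Wlim x)))
    (C D : ℕ → H →L[ℂ] H)
    (hC : ∀ n, J.comp (C n) = (W n).comp J)
    (hD : ∀ n, J.comp (D n) = (star (W n)).comp J)
    (hCconv : ∀ x : H, ∃ y : H,
      Tendsto (fun n => ContinuousLinearMap.adjoint (C n) (C n x)) atTop (nhds y))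
    (hDconv : ∀ x : H, ∃ y : H,
      Tendsto (fun n => ContinuousLinearMap.adjoint (D n) (D n x)) atTop (nhds y)) :
    ∃ Clim : H →L[ℂ] H, J.comp Clim = Wlim.comp J ∧
      (∀ C' : H →L[ℂ] H, J.comp C' = Wlim.comp J → C' = Clim) ∧
      (∀ x : H, Tendsto (fun n => C n x) atTop (nhds (Clim x))) ∧
      (∀ x : H, Tendsto (fun n => ContinuousLinearMap.adjoint (C n) x) atTop
        (nhds (ContinuousLinearMap.adjoint Clim x))) := by
  classical
  have hJadj : ContinuousLinearMap.adjoint J = J := isSelfAdjoint_iff'.mp hJsa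
  -- pointwise forms
  have hCp : ∀ n x, J (C n x) = W n (J x) := fun n x => by
    have := ContinuousLinearMap.ext_iff.mp (hC n) x
    simpa using this
  have hDp : ∀ n x, J (D n x) = star (W n) (J x) := fun n x => by
    have := ContinuousLinearMap.ext_iff.mp (hD n) x
    simpa using this
  -- unitary pointwise identities
  have hWWs : ∀ n v, W n (star (W n) v) = v := by
    intro n v
    have h1 : (W n * star (W n)) v = (1 : H →L[ℂ] H) v := by
      rw [Unitary.mul_star_self_of_mem (hWu n)]
    simpa [ContinuousLinearMap.mul_apply] using h1
  have hWsW : ∀ n v, star (W n) (W n v) = v := by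
    intro n v
    have h1 : (star (W n) * W n) v = (1 : H →L[ℂ] H) v := by
      rw [Unitary.star_mul_self_of_mem (hWu n)]
    simpa [ContinuousLinearMap.mul_apply] using h1
  have hWlWs : ∀ v, Wlim (star Wlim v) = v := by
    intro v
    have h1 : (Wlim * star Wlim) v = (1 : H →L[ℂ] H) v := by
      rw [Unitary.mul_star_self_of_mem hWlimu]
    simpa [ContinuousLinearMap.mul_apply] using h1
  -- C n ∘ D n = id and D n ∘ C n = id
  have hCDp : ∀ n x, C n (D n x) = x := by
    intro n x
    apply hJinj
    rw [hCp, hDp, hWWs]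
  have hDCp : ∀ n x, D n (C n x) = x := by
    intro n x
    apply hJinj
    rw [hDp, hCp, hWsW]
  have hCD1 : ∀ n, (C n).comp (D n) = ContinuousLinearMap.id ℂ H := by
    intro n; ext x; simpa using hCDp n x
  have hDC1 : ∀ n, (D n).comp (C n) = ContinuousLinearMap.id ℂ H := by
    intro n; ext x; simpa using hDCp n x
  -- adjoint identities
  have hadjCDp : ∀ n (z : H),
      ContinuousLinearMap.adjoint (C n) (ContinuousLinearMap.adjoint (D n) z) = z := by
    intro n z
    have h1 : ContinuousLinearMap.adjoint ((D n).comp (C n)) =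
        ContinuousLinearMap.adjoint (ContinuousLinearMap.id ℂ H) := by rw [hDC1 n]
    rw [adjoint_comp, adjoint_id] at h1
    have := ContinuousLinearMap.ext_iff.mp h1 z
    simpa using this
  have hadjDCp : ∀ n (z : H),
      ContinuousLinearMap.adjoint (D n) (ContinuousLinearMap.adjoint (C n) z) = z := by
    intro n z
    have h1 : ContinuousLinearMap.adjoint ((C n).comp (D n)) =
        ContinuousLinearMap.adjoint (ContinuousLinearMap.id ℂ H) := by rw [hCD1 n]
    rw [adjoint_comp, adjoint_id] at h1
    have := ContinuousLinearMap.ext_iff.mp h1 z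
    simpa using this
  -- adjoint intertwining relations
  have hCadjp : ∀ n y, ContinuousLinearMap.adjoint (C n) (J y) =
      J (ContinuousLinearMap.adjoint (W n) y) := by
    intro n y
    have h1 : ContinuousLinearMap.adjoint (J.comp (C n)) =
        ContinuousLinearMap.adjoint ((W n).comp J) := by rw [hC n]
    rw [adjoint_comp, adjoint_comp, hJadj] at h1
    have := ContinuousLinearMap.ext_iff.mp h1 y
    simpa using this
  have hDadjp : ∀ n y, ContinuousLinearMap.adjoint (D n) (J y) = J (W n y) := by
    intro n y
    have h1 : ContinuousLinearMap.adjoint (J.comp (D n)) =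
        ContinuousLinearMap.adjoint ((star (W n)).comp J) := by rw [hD n]
    rw [adjoint_comp, adjoint_comp, hJadj] at h1
    have h2 : ContinuousLinearMap.adjoint (star (W n)) = W n := by
      rw [← star_eq_adjoint, star_star]
    rw [h2] at h1
    have := ContinuousLinearMap.ext_iff.mp h1 y
    simpa [star_eq_adjoint] using this
  -- uniform bounds via Banach–Steinhaus
  obtain ⟨KC, hKC⟩ : ∃ K, ∀ n, ‖ContinuousLinearMap.adjoint (C n) ∘L C n‖ ≤ K := by
    apply banach_steinhaus
    intro x
    obtain ⟨y, hy⟩ := hCconv x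
    obtain ⟨b, hb⟩ := hy.norm.bddAbove_range
    exact ⟨b, fun n => by simpa using hb ⟨n, rfl⟩⟩
  obtain ⟨KD, hKD⟩ : ∃ K, ∀ n, ‖ContinuousLinearMap.adjoint (D n) ∘L D n‖ ≤ K := by
    apply banach_steinhaus
    intro x
    obtain ⟨y, hy⟩ := hDconv x
    obtain ⟨b, hb⟩ := hy.norm.bddAbove_range
    exact ⟨b, fun n => by simpa using hb ⟨n, rfl⟩⟩
  set M : ℝ := max 1 (max KC KD) with hMdef
  have hM1 : (1 : ℝ) ≤ M := le_max_left _ _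
  have hnormC : ∀ n, ‖C n‖ ≤ M := by
    intro n
    have h1 : ‖C n‖ * ‖C n‖ ≤ M := by
      rw [← norm_adjoint_comp_self]
      exact (hKC n).trans ((le_max_left KC KD).trans (le_max_right _ _))
    nlinarith [norm_nonneg (C n)]
  have hnormD : ∀ n, ‖D n‖ ≤ M := by
    intro n
    have h1 : ‖D n‖ * ‖D n‖ ≤ M := by
      rw [← norm_adjoint_comp_self]
      exact (hKD n).trans ((le_max_right KC KD).trans (le_max_right _ _))
    nlinarith [norm_nonneg (D n)]
  have hnormCa : ∀ n, ‖ContinuousLinearMap.adjoint (C n)‖ ≤ M := fun n => by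
    rw [ContinuousLinearMap.adjoint.norm_map (C n)]; exact hnormC n
  have hnormDa : ∀ n, ‖ContinuousLinearMap.adjoint (D n)‖ ≤ M := fun n => by
    rw [ContinuousLinearMap.adjoint.norm_map (D n)]; exact hnormD n
  have hCb : ∀ n (x : H), ‖C n x‖ ≤ M * ‖x‖ := fun n x =>
    ((C n).le_opNorm x).trans (mul_le_mul_of_nonneg_right (hnormC n) (norm_nonneg x))
  have hCab : ∀ n (x : H), ‖ContinuousLinearMap.adjoint (C n) x‖ ≤ M * ‖x‖ := fun n x =>
    ((ContinuousLinearMap.adjoint (C n)).le_opNorm x).trans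
      (mul_le_mul_of_nonneg_right (hnormCa n) (norm_nonneg x))
  have hDab : ∀ n (x : H), ‖ContinuousLinearMap.adjoint (D n) x‖ ≤ M * ‖x‖ := fun n x =>
    ((ContinuousLinearMap.adjoint (D n)).le_opNorm x).trans
      (mul_le_mul_of_nonneg_right (hnormDa n) (norm_nonneg x))
  -- strong convergence of adjoints of unitaries
  have hWadjconv : ∀ x : H, Tendsto (fun n => ContinuousLinearMap.adjoint (W n) x) atTop
      (nhds (ContinuousLinearMap.adjoint Wlim x)) := by
    intro x
    rw [tendsto_iff_norm_sub_tendsto_zero]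
    have key : ∀ n, ‖ContinuousLinearMap.adjoint (W n) x - ContinuousLinearMap.adjoint Wlim x‖
        = ‖x - W n (ContinuousLinearMap.adjoint Wlim x)‖ := by
      intro n
      rw [← norm_map_of_mem_unitary (hWu n)
        (ContinuousLinearMap.adjoint (W n) x - ContinuousLinearMap.adjoint Wlim x), map_sub]
      congr 2
      have := hWWs n x
      rwa [star_eq_adjoint] at this
    have h2 : Tendsto (fun n => ‖x - W n (ContinuousLinearMap.adjoint Wlim x)‖) atTop
        (nhds 0) := by
      have h3 : Wlim (ContinuousLinearMap.adjoint Wlim x) = x := by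
        have := hWlWs x; rwa [star_eq_adjoint] at this
      have h4 := ((tendsto_const_nhds (x := x) (f := atTop)).sub (hWconv (ContinuousLinearMap.adjoint Wlim x))).norm
      rw [h3] at h4
      simpa using h4
    exact h2.congr (fun n => (key n).symm)
  -- density of the range of J
  have hdense : Dense (Set.range J) := by
    have horth : (LinearMap.range (J : H →ₗ[ℂ] H))ᗮ = ⊥ := by
      rw [Submodule.eq_bot_iff]
      intro x hx
      have hx' : ∀ z : H, inner ℂ (J z) x = (0 : ℂ) := by
        intro z
        exact hx (J z) (LinearMap.mem_range_self _ z)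
      have h2 : ∀ z : H, inner ℂ z (J x) = (0 : ℂ) := by
        intro z
        rw [← adjoint_inner_left, hJadj]
        exact hx' z
      have h3 : J x = 0 := by
        have := h2 (J x)
        rwa [inner_self_eq_zero] at this
      exact hJinj (by simpa using h3)
    have htop : (LinearMap.range (J : H →ₗ[ℂ] H)).topologicalClosure = ⊤ :=
      Submodule.topologicalClosure_eq_top_iff.mpr horth
    rw [dense_iff_closure_eq]
    have h5 : closure (Set.range J) = ((LinearMap.range (J : H →ₗ[ℂ] H)).topologicalClosure : Set H) := by
      rw [Submodule.topologicalClosure_coe]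
      congr 1
    rw [h5, htop]
    rfl
  -- pointwise convergence of adjoints of D and C
  have hDadjconv : ∀ x : H, ∃ y : H,
      Tendsto (fun n => ContinuousLinearMap.adjoint (D n) x) atTop (nhds y) := by
    apply aux_dense_limit (fun n => ContinuousLinearMap.adjoint (D n)) M hDab hdense
    rintro z ⟨u, rfl⟩
    refine ⟨J (Wlim u), ?_⟩
    have h1 : Tendsto (fun n => J (W n u)) atTop (nhds (J (Wlim u))) :=
      (J.continuous.tendsto _).comp (hWconv u)
    exact h1.congr (fun n => (hDadjp n u).symm)
  have hCadjconv : ∀ x : H, ∃ y : H,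
      Tendsto (fun n => ContinuousLinearMap.adjoint (C n) x) atTop (nhds y) := by
    apply aux_dense_limit (fun n => ContinuousLinearMap.adjoint (C n)) M hCab hdense
    rintro z ⟨u, rfl⟩
    refine ⟨J (ContinuousLinearMap.adjoint Wlim u), ?_⟩
    have h1 : Tendsto (fun n => J (ContinuousLinearMap.adjoint (W n) u)) atTop
        (nhds (J (ContinuousLinearMap.adjoint Wlim u))) :=
      (J.continuous.tendsto _).comp (hWadjconv u)
    exact h1.congr (fun n => (hCadjp n u).symm)
  -- the strong limit T of D_n* D_n
  obtain ⟨T, hT⟩ : ∃ T : H →L[ℂ] H, ∀ x,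
      Tendsto (fun n => ContinuousLinearMap.adjoint (D n) (D n x)) atTop (nhds (T x)) := by
    have hb : ∀ n (x : H), ‖ContinuousLinearMap.adjoint (D n) (D n x)‖ ≤ (M * M) * ‖x‖ := by
      intro n x
      calc ‖ContinuousLinearMap.adjoint (D n) (D n x)‖ ≤ M * ‖D n x‖ := hDab n _
        _ ≤ M * (M * ‖x‖) := by
            have := hCb -- dummy
            exact mul_le_mul_of_nonneg_left
              (((D n).le_opNorm x).trans (mul_le_mul_of_nonneg_right (hnormD n) (norm_nonneg x)))
              (le_trans zero_le_one hM1)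
        _ = (M * M) * ‖x‖ := by ring
    obtain ⟨B, hB⟩ := aux_strong_limit_s16
      (fun n => (ContinuousLinearMap.adjoint (D n)).comp (D n)) (M * M)
      (fun n x => by simpa using hb n x) (fun x => by simpa using hDconv x)
    exact ⟨B, fun x => by simpa using hB x⟩
  -- T is bounded below
  have hTlow : ∀ x : H, ‖x‖ ≤ (M * M) * ‖T x‖ := by
    intro x
    have h1 : ∀ n, ‖x‖ ≤ (M * M) * ‖ContinuousLinearMap.adjoint (D n) (D n x)‖ := by
      intro n
      have e1 : C n (ContinuousLinearMap.adjoint (C n)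
          (ContinuousLinearMap.adjoint (D n) (D n x))) = x := by
        rw [hadjCDp n (D n x), hCDp n x]
      calc ‖x‖ = ‖C n (ContinuousLinearMap.adjoint (C n)
            (ContinuousLinearMap.adjoint (D n) (D n x)))‖ := by rw [e1]
        _ ≤ M * ‖ContinuousLinearMap.adjoint (C n)
            (ContinuousLinearMap.adjoint (D n) (D n x))‖ := hCb n _
        _ ≤ M * (M * ‖ContinuousLinearMap.adjoint (D n) (D n x)‖) :=
            mul_le_mul_of_nonneg_left (hCab n _) (le_trans zero_le_one hM1)
        _ = (M * M) * ‖ContinuousLinearMap.adjoint (D n) (D n x)‖ := by ring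
    have h2 : Tendsto (fun n => (M * M) * ‖ContinuousLinearMap.adjoint (D n) (D n x)‖) atTop
        (nhds ((M * M) * ‖T x‖)) := (hT x).norm.const_mul _
    exact ge_of_tendsto' h2 h1
  -- T is symmetric
  have hTsym : ∀ x y : H, (inner ℂ (T x) y : ℂ) = inner ℂ x (T y) := by
    intro x y
    have h1 : Tendsto (fun n => (inner ℂ (ContinuousLinearMap.adjoint (D n) (D n x)) y : ℂ))
        atTop (nhds (inner ℂ (T x) y)) := (hT x).inner tendsto_const_nhds
    have h2 : Tendsto (fun n => (inner ℂ x (ContinuousLinearMap.adjoint (D n) (D n y)) : ℂ))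
        atTop (nhds (inner ℂ x (T y))) := tendsto_const_nhds.inner (hT y)
    refine tendsto_nhds_unique h1 (h2.congr fun n => ?_)
    rw [adjoint_inner_right, adjoint_inner_left]
  -- T is injective
  have hTinj : ∀ x : H, T x = 0 → x = 0 := by
    intro x hx
    have := hTlow x
    rw [hx] at this
    simp only [norm_zero, mul_zero] at this
    exact norm_le_zero_iff.mp this
  -- T is surjective
  have hTsurj : ∀ u : H, ∃ v : H, T v = u := by
    have hMM : (0 : ℝ) ≤ M * M := by nlinarith
    have antilip : AntilipschitzWith (M * M).toNNReal T := by
      apply ContinuousLinearMap.antilipschitz_of_bound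
      intro x
      rw [Real.coe_toNNReal _ hMM]
      exact hTlow x
    have hclosed : IsClosed (Set.range T) := antilip.isClosed_range T.uniformContinuous
    have hdenseT : Dense (Set.range T) := by
      have horth : (LinearMap.range (T : H →ₗ[ℂ] H))ᗮ = ⊥ := by
        rw [Submodule.eq_bot_iff]
        intro x hx
        have hx' : ∀ z : H, inner ℂ (T z) x = (0 : ℂ) := by
          intro z
          exact hx (T z) (LinearMap.mem_range_self _ z)
        have h2 : ∀ z : H, inner ℂ z (T x) = (0 : ℂ) := by
          intro z
          rw [← hTsym z x]
          exact hx' z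
        have h3 : T x = 0 := by
          have := h2 (T x)
          rwa [inner_self_eq_zero] at this
        exact hTinj x h3
      have htop : (LinearMap.range (T : H →ₗ[ℂ] H)).topologicalClosure = ⊤ :=
        Submodule.topologicalClosure_eq_top_iff.mpr horth
      rw [dense_iff_closure_eq]
      have h5 : closure (Set.range T) = ((LinearMap.range (T : H →ₗ[ℂ] H)).topologicalClosure : Set H) := by
        rw [Submodule.topologicalClosure_coe]
        congr 1
      rw [h5, htop]
      rfl
    have huniv : Set.range T = Set.univ := by
      rw [← hclosed.closure_eq, hdenseT.closure_eq]
    intro u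
    exact Set.eq_univ_iff_forall.mp huniv u
  -- strong convergence of C n
  have hClimconv : ∀ x : H, ∃ v : H, Tendsto (fun n => C n x) atTop (nhds v) := by
    intro x
    obtain ⟨u, hu⟩ := hDadjconv x
    obtain ⟨v, hv⟩ := hTsurj u
    refine ⟨v, ?_⟩
    rw [tendsto_iff_norm_sub_tendsto_zero]
    have bound : ∀ n, ‖C n x - v‖ ≤
        (M * M) * ‖ContinuousLinearMap.adjoint (D n) x - u‖
          + (M * M) * ‖T v - ContinuousLinearMap.adjoint (D n) (D n v)‖ := by
      intro n
      set Δ : H := ContinuousLinearMap.adjoint (D n) x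
        - ContinuousLinearMap.adjoint (D n) (D n v) with hΔ
      have e1 : C n x - v = C n (ContinuousLinearMap.adjoint (C n) Δ) := by
        rw [hΔ, map_sub, map_sub, hadjCDp n x, hadjCDp n (D n v), hCDp n v]
      have e2 : ‖C n x - v‖ ≤ (M * M) * ‖Δ‖ := by
        rw [e1]
        calc ‖C n (ContinuousLinearMap.adjoint (C n) Δ)‖
            ≤ M * ‖ContinuousLinearMap.adjoint (C n) Δ‖ := hCb n _
          _ ≤ M * (M * ‖Δ‖) :=
              mul_le_mul_of_nonneg_left (hCab n _) (le_trans zero_le_one hM1)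
          _ = (M * M) * ‖Δ‖ := by ring
      have e3 : ‖Δ‖ ≤ ‖ContinuousLinearMap.adjoint (D n) x - u‖
          + ‖T v - ContinuousLinearMap.adjoint (D n) (D n v)‖ := by
        have : Δ = (ContinuousLinearMap.adjoint (D n) x - u)
            + (T v - ContinuousLinearMap.adjoint (D n) (D n v)) := by
          rw [hΔ, hv]; abel
        rw [this]
        exact norm_add_le _ _
      calc ‖C n x - v‖ ≤ (M * M) * ‖Δ‖ := e2
        _ ≤ (M * M) * (‖ContinuousLinearMap.adjoint (D n) x - u‖
              + ‖T v - ContinuousLinearMap.adjoint (D n) (D n v)‖) := by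
            apply mul_le_mul_of_nonneg_left e3
            nlinarith
        _ = (M * M) * ‖ContinuousLinearMap.adjoint (D n) x - u‖
              + (M * M) * ‖T v - ContinuousLinearMap.adjoint (D n) (D n v)‖ := by ring
    have t1 : Tendsto (fun n => (M * M) * ‖ContinuousLinearMap.adjoint (D n) x - u‖) atTop
        (nhds 0) := by
      have := ((hu.sub (tendsto_const_nhds (x := u) (f := atTop))).norm).const_mul (M * M)
      simpa using this
    have t2 : Tendsto (fun n => (M * M)
        * ‖T v - ContinuousLinearMap.adjoint (D n) (D n v)‖) atTop (nhds 0) := by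
      have := (((tendsto_const_nhds (x := T v) (f := atTop)).sub (hT v)).norm).const_mul (M * M)
      simpa using this
    have t3 : Tendsto (fun n => (M * M) * ‖ContinuousLinearMap.adjoint (D n) x - u‖
        + (M * M) * ‖T v - ContinuousLinearMap.adjoint (D n) (D n v)‖) atTop (nhds 0) := by
      simpa using t1.add t2
    exact squeeze_zero (fun n => norm_nonneg _) bound t3
  -- the limit operator
  obtain ⟨Clim, hClim⟩ := aux_strong_limit_s16 C M hCb hClimconv
  refine ⟨Clim, ?_, ?_, hClim, ?_⟩
  · -- J ∘ Clim = Wlim ∘ J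
    ext x
    simp only [ContinuousLinearMap.comp_apply]
    have h1 : Tendsto (fun n => J (C n x)) atTop (nhds (J (Clim x))) :=
      (J.continuous.tendsto _).comp (hClim x)
    have h2 : Tendsto (fun n => J (C n x)) atTop (nhds (Wlim (J x))) :=
      (hWconv (J x)).congr (fun n => (hCp n x).symm)
    exact tendsto_nhds_unique h1 h2
  · -- uniqueness
    intro C' hC'
    ext x
    apply hJinj
    have h1 := ContinuousLinearMap.ext_iff.mp hC' x
    have h2 : J (Clim x) = Wlim (J x) := by
      have h3 : Tendsto (fun n => J (C n x)) atTop (nhds (J (Clim x))) :=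
        (J.continuous.tendsto _).comp (hClim x)
      have h4 : Tendsto (fun n => J (C n x)) atTop (nhds (Wlim (J x))) :=
        (hWconv (J x)).congr (fun n => (hCp n x).symm)
      exact tendsto_nhds_unique h3 h4
    simp only [ContinuousLinearMap.comp_apply] at h1
    rw [h1, h2]
  · -- convergence of adjoints
    intro x
    obtain ⟨l, hl⟩ := hCadjconv x
    have hle : l = ContinuousLinearMap.adjoint Clim x := by
      apply ext_inner_right ℂ
      intro y
      have h1 : Tendsto (fun n => (inner ℂ (ContinuousLinearMap.adjoint (C n) x) y : ℂ)) atTop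
          (nhds (inner ℂ l y)) := hl.inner tendsto_const_nhds
      have h2 : Tendsto (fun n => (inner ℂ x (C n y) : ℂ)) atTop
          (nhds (inner ℂ x (Clim y))) := tendsto_const_nhds.inner (hClim y)
      have h3 : Tendsto (fun n => (inner ℂ (ContinuousLinearMap.adjoint (C n) x) y : ℂ)) atTop
          (nhds (inner ℂ x (Clim y))) := h2.congr (fun n => (adjoint_inner_left _ _ _).symm)
      rw [tendsto_nhds_unique h1 h3, adjoint_inner_left]
    rw [← hle]
    exact hl
end
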